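/- arXiv:1805.09737 — 7 statements merged into one kernel-verified Lean document; each statement's English description precedes it below -/
import Mathlib

section
/- Let A, B be n×n real symmetric matrices with rank(B) ≤ 2. Then for every skew-symmetric matrix W ∈ Kⁿ with ‖W‖_F = 1 there exists a symmetric matrix U ∈ Sⁿ with ‖U‖_F = 1 such that trace(A·U·B·U) = trace(A·W·B·Wᵀ). -/
open Matrix

noncomputable def frobNorm {n : ℕ} (M : Matrix (Fin n) (Fin n) ℝ) : ℝ :=
  Real.sqrt (Mᵀ * M).trace

section helpers

variable {n : ℕ}

lemma mul_vmv (M : Matrix (Fin n) (Fin n) ℝ) (a b : Fin n → ℝ) :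
    M * vecMulVec a b = vecMulVec (M *ᵥ a) b := by
  ext i j
  simp [vecMulVec_apply, Matrix.mul_apply, mulVec, dotProduct, Finset.sum_mul, mul_assoc]

lemma vmv_mul (M : Matrix (Fin n) (Fin n) ℝ) (a b : Fin n → ℝ) :
    vecMulVec a b * M = vecMulVec a (Mᵀ *ᵥ b) := by
  ext i j
  simp [vecMulVec_apply, Matrix.mul_apply, mulVec, dotProduct, Finset.mul_sum, transpose_apply]
  exact Finset.sum_congr rfl (fun k _ => by ring)

lemma trace_vmv (a b : Fin n → ℝ) : (vecMulVec a b).trace = a ⬝ᵥ b := by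
  simp [Matrix.trace, vecMulVec_apply, dotProduct, Matrix.diag]

lemma vmv_vmv (a b c d : Fin n → ℝ) :
    vecMulVec a b * vecMulVec c d = (b ⬝ᵥ c) • vecMulVec a d := by
  ext i j
  simp [vecMulVec_apply, Matrix.mul_apply, dotProduct, Finset.sum_mul, Finset.mul_sum]
  exact Finset.sum_congr rfl (fun k _ => by ring)

lemma vmv_mulVec (a b w : Fin n → ℝ) : vecMulVec a b *ᵥ w = (b ⬝ᵥ w) • a := by
  ext i
  simp [vecMulVec_apply, mulVec, dotProduct, Finset.sum_mul, Finset.mul_sum]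
  exact Finset.sum_congr rfl (fun k _ => by ring)

lemma dp_mulVec (M : Matrix (Fin n) (Fin n) ℝ) (a b : Fin n → ℝ) :
    a ⬝ᵥ (M *ᵥ b) = (Mᵀ *ᵥ a) ⬝ᵥ b := by
  rw [Matrix.dotProduct_mulVec, ← Matrix.vecMul_transpose, transpose_transpose]

lemma vmv_transpose (a b : Fin n → ℝ) : (vecMulVec a b)ᵀ = vecMulVec b a := by
  ext i j; simp [vecMulVec_apply, transpose_apply, mul_comm]

lemma vmv_neg_right (a b : Fin n → ℝ) : vecMulVec a (-b) = -vecMulVec a b := by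
  ext i j; simp [vecMulVec_apply]

lemma vmv_neg_left (a b : Fin n → ℝ) : vecMulVec (-a) b = -vecMulVec a b := by
  ext i j; simp [vecMulVec_apply]

lemma vmv_smul_left (s : ℝ) (a b : Fin n → ℝ) : vecMulVec (s • a) b = s • vecMulVec a b := by
  ext i j; simp [vecMulVec_apply]; ring

lemma vmv_smul_right (s : ℝ) (a b : Fin n → ℝ) : vecMulVec a (s • b) = s • vecMulVec a b := by
  ext i j; simp [vecMulVec_apply]; ring

lemma trace_conj_nonneg (M : Matrix (Fin n) (Fin n) ℝ) : 0 ≤ (Mᵀ * M).trace := by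
  rw [Matrix.trace]
  refine Finset.sum_nonneg fun j _ => ?_
  have : (Mᵀ * M).diag j = ∑ i, (M i j)^2 := by
    simp [Matrix.diag, Matrix.mul_apply, transpose_apply, sq]
  rw [this]
  exact Finset.sum_nonneg fun i _ => sq_nonneg _

lemma trace_conj_eq_zero {M : Matrix (Fin n) (Fin n) ℝ} (h : (Mᵀ * M).trace = 0) : M = 0 := by
  ext i j
  have hd : ∀ k, (Mᵀ * M).diag k = ∑ r, (M r k)^2 := by
    intro k; simp [Matrix.diag, Matrix.mul_apply, transpose_apply, sq]
  have h0 : ∀ k ∈ Finset.univ, (0:ℝ) ≤ (Mᵀ * M).diag k := fun k _ => by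
    rw [hd]; exact Finset.sum_nonneg fun r _ => sq_nonneg _
  have := (Finset.sum_eq_zero_iff_of_nonneg h0).mp h j (Finset.mem_univ j)
  rw [hd] at this
  have := (Finset.sum_eq_zero_iff_of_nonneg (fun r _ => sq_nonneg (M r j))).mp this i
    (Finset.mem_univ i)
  simpa using this


lemma qf_sym (A S : Matrix (Fin n) (Fin n) ℝ) (hS : Sᵀ = S) (x y : Fin n → ℝ) (α β : ℝ) :
    (A * S * (α • vecMulVec x x + β • vecMulVec y y) * S).trace
      = α * ((A *ᵥ (S *ᵥ x)) ⬝ᵥ (S *ᵥ x)) + β * ((A *ᵥ (S *ᵥ y)) ⬝ᵥ (S *ᵥ y)) := by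
  simp only [mul_add, add_mul, mul_smul_comm, smul_mul_assoc, trace_add, trace_smul,
    mul_assoc, vmv_mul, hS, mul_vmv, trace_vmv, smul_eq_mul]

lemma qf_skew (A W : Matrix (Fin n) (Fin n) ℝ) (x y : Fin n → ℝ) (α β : ℝ) :
    (A * W * (α • vecMulVec x x + β • vecMulVec y y) * Wᵀ).trace
      = α * ((A *ᵥ (W *ᵥ x)) ⬝ᵥ (W *ᵥ x)) + β * ((A *ᵥ (W *ᵥ y)) ⬝ᵥ (W *ᵥ y)) := by
  simp only [mul_add, add_mul, mul_smul_comm, smul_mul_assoc, trace_add, trace_smul,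
    mul_assoc, vmv_mul, transpose_transpose, mul_vmv, trace_vmv, smul_eq_mul]

lemma key (A B : Matrix (Fin n) (Fin n) ℝ) (x y : Fin n → ℝ)
    (hx : x ⬝ᵥ x = 1) (hy : y ⬝ᵥ y = 1) (hxy : x ⬝ᵥ y = 0) (α β : ℝ)
    (hBeq : B = α • vecMulVec x x + β • vecMulVec y y)
    (W : Matrix (Fin n) (Fin n) ℝ) (hW : Wᵀ = -W) (hWn : (Wᵀ * W).trace = 1) :
    ∃ U : Matrix (Fin n) (Fin n) ℝ, Uᵀ = U ∧ (Uᵀ * U).trace = 1 ∧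
      (A * U * B * U).trace = (A * W * B * Wᵀ).trace := by
  set X := vecMulVec x x with hX
  set Y := vecMulVec y y with hY
  set G := vecMulVec x y + vecMulVec y x with hG
  set γ := y ⬝ᵥ (W *ᵥ x) with hγ
  set U₀ := W * (X - Y) - (X - Y) * W - γ • G with hU
  -- basic dot product facts
  have hyx : y ⬝ᵥ x = 0 := by rw [dotProduct_comm]; exact hxy
  have hxu : x ⬝ᵥ (W *ᵥ x) = 0 := by
    have := dp_mulVec W x x
    rw [hW] at this
    rw [Matrix.neg_mulVec, neg_dotProduct, dotProduct_comm (W *ᵥ x) x] at this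
    linarith [this]
  have hyv : y ⬝ᵥ (W *ᵥ y) = 0 := by
    have := dp_mulVec W y y
    rw [hW, Matrix.neg_mulVec, neg_dotProduct, dotProduct_comm (W *ᵥ y) y] at this; linarith [this]
  have hxv : x ⬝ᵥ (W *ᵥ y) = -γ := by
    have := dp_mulVec W x y
    rw [hW, Matrix.neg_mulVec, neg_dotProduct] at this
    rw [this, hγ, dotProduct_comm]
  -- norm of U₀
  have hnorm : (U₀ᵀ * U₀).trace
      = 2 * ((W *ᵥ x) ⬝ᵥ (W *ᵥ x)) + 2 * ((W *ᵥ y) ⬝ᵥ (W *ᵥ y)) - 2 * γ ^ 2 := by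
    have hUt : U₀ᵀ = U₀ := by
      rw [hU]
      simp [transpose_sub, transpose_mul, transpose_smul, transpose_add, hW, hX, hY, hG,
        vmv_transpose]
      abel
    rw [hUt, hU, hX, hY, hG]
    simp only [mul_sub, sub_mul, mul_add, add_mul, smul_mul_assoc, mul_smul_comm,
      trace_add, trace_sub, trace_smul, mul_vmv, vmv_mul, vmv_vmv, hW, neg_mulVec,
      vmv_neg_right, vmv_neg_left, vmv_mulVec, vmv_smul_left, vmv_smul_right,
      trace_vmv, smul_eq_mul, dotProduct_smul, dotProduct_neg, neg_dotProduct,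
      smul_dotProduct, trace_neg, smul_smul, smul_neg, neg_neg, transpose_neg, neg_mul, mul_neg,
      dotProduct_comm, hxu, hyv, hxv, hxy, hyx, hx, hy]
    ring_nf
  -- mulVec facts
  have hUx : U₀ *ᵥ x = W *ᵥ x := by
    rw [hU, hX, hY, hG]
    simp only [Matrix.sub_mulVec, Matrix.add_mulVec, Matrix.smul_mulVec,
      ← Matrix.mulVec_mulVec, vmv_mulVec, hx, hy, hxy, hyx, hxu, hxv,
      Matrix.mulVec_smul, Matrix.mulVec_sub, Matrix.mulVec_add]
    simp [hxu, ← hγ]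
  have hUy : U₀ *ᵥ y = -(W *ᵥ y) := by
    rw [hU, hX, hY, hG]
    simp only [Matrix.sub_mulVec, Matrix.add_mulVec, Matrix.smul_mulVec,
      ← Matrix.mulVec_mulVec, vmv_mulVec, hx, hy, hxy, hyx, hyv, hxv,
      Matrix.mulVec_smul, Matrix.mulVec_sub, Matrix.mulVec_add]
    simp [hyv, ← hγ, hxv]
  set P := (1 : Matrix (Fin n) (Fin n) ℝ) - X - Y with hP
  set N := P * (W * P) with hN
  have hPt : Pᵀ = P := by
    rw [hP, hX, hY]; simp [transpose_sub, vmv_transpose]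
  have hPx : P *ᵥ x = 0 := by
    rw [hP, hX, hY]
    simp [Matrix.sub_mulVec, vmv_mulVec, hx, hyx]
  have hPy : P *ᵥ y = 0 := by
    rw [hP, hX, hY]
    simp [Matrix.sub_mulVec, vmv_mulVec, hy, hxy]
  have hNx : Nᵀ *ᵥ x = 0 := by
    rw [hN, transpose_mul, ← Matrix.mulVec_mulVec, hPt, hPx, Matrix.mulVec_zero]
  have hNy : Nᵀ *ᵥ y = 0 := by
    rw [hN, transpose_mul, ← Matrix.mulVec_mulVec, hPt, hPy, Matrix.mulVec_zero]
  have hWW : ∀ a w : Fin n → ℝ, a ⬝ᵥ (W *ᵥ (W *ᵥ w)) = -((W *ᵥ a) ⬝ᵥ (W *ᵥ w)) := by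
    intro a w
    rw [dp_mulVec, hW, Matrix.neg_mulVec, neg_dotProduct]
  have hNE : (Nᵀ * N).trace + (U₀ᵀ * U₀).trace = (Wᵀ * W).trace := by
    rw [hnorm, hN, hP, hX, hY, hW]
    simp only [transpose_mul, transpose_sub, transpose_one, transpose_neg, vmv_transpose,
      mul_sub, sub_mul, mul_add, add_mul, mul_one, one_mul, smul_mul_assoc, mul_smul_comm,
      trace_add, trace_sub, trace_smul, trace_neg, neg_mul, mul_neg, neg_neg, neg_sub,
      mul_vmv, vmv_mul, vmv_vmv, Matrix.neg_mulVec, vmv_neg_right, vmv_neg_left, vmv_mulVec,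
      vmv_smul_left, vmv_smul_right, trace_vmv, smul_eq_mul, dotProduct_smul, dotProduct_neg,
      neg_dotProduct, smul_dotProduct, smul_smul, smul_neg, hW, transpose_smul,
      zero_smul, smul_zero, Matrix.zero_mul, Matrix.mul_zero, trace_zero, Matrix.mulVec_zero,
      Matrix.zero_mulVec, dotProduct_zero, zero_dotProduct,
      hWW, dotProduct_comm, hxu, hyv, hxv, hxy, hyx, hx, hy]
    ring_nf
    rw [← hγ]; ring
  have hUt : U₀ᵀ = U₀ := by
    rw [hU]
    simp [transpose_sub, transpose_mul, transpose_smul, transpose_add, hW, hX, hY, hG,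
      vmv_transpose]
    abel
  -- find the correction matrix R
  have hE0 : (0:ℝ) ≤ (Nᵀ * N).trace := trace_conj_nonneg N
  obtain ⟨R, hRt, hRx, hRy, hRz, hRn⟩ : ∃ R : Matrix (Fin n) (Fin n) ℝ, Rᵀ = R ∧
      R *ᵥ x = 0 ∧ R *ᵥ y = 0 ∧ (U₀ * R).trace = 0 ∧ (Rᵀ * R).trace = (Nᵀ * N).trace := by
    rcases eq_or_lt_of_le hE0 with hE | hE
    · exact ⟨0, by simp, by simp, by simp, by simp, by simp [← hE]⟩
    · have hNne : N ≠ 0 := by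
        intro h0
        rw [h0] at hE; simp at hE
      have : ∃ i j, N i j ≠ 0 := by
        by_contra h
        push_neg at h
        exact hNne (by ext i j; simpa using h i j)
      obtain ⟨i₀, j₀, hij⟩ := this
      set z : Fin n → ℝ := fun i => N i j₀ with hz
      have hzx : z ⬝ᵥ x = 0 := by
        have := congrFun hNx j₀
        simpa [Matrix.mulVec, dotProduct, transpose_apply, mul_comm] using this
      have hzy : z ⬝ᵥ y = 0 := by
        have := congrFun hNy j₀
        simpa [Matrix.mulVec, dotProduct, transpose_apply, mul_comm] using this
      have hzz : 0 < z ⬝ᵥ z := by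
        have h1 : z i₀ * z i₀ ≤ z ⬝ᵥ z := by
          apply Finset.single_le_sum (f := fun i => z i * z i)
          · exact fun i _ => mul_self_nonneg _
          · exact Finset.mem_univ i₀
        have h2 : 0 < z i₀ * z i₀ := mul_self_pos.mpr hij
        linarith
      set c : ℝ := Real.sqrt ((Nᵀ * N).trace) / (z ⬝ᵥ z) with hc
      refine ⟨c • vecMulVec z z, ?_, ?_, ?_, ?_, ?_⟩
      · simp [transpose_smul, vmv_transpose]
      · simp [Matrix.smul_mulVec, vmv_mulVec, hzx]
      · simp [Matrix.smul_mulVec, vmv_mulVec, hzy]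
      · have hUz : z ⬝ᵥ (U₀ *ᵥ z) = 0 := by
          rw [hU, hX, hY, hG]
          have hxz : x ⬝ᵥ z = 0 := by rw [dotProduct_comm]; exact hzx
          have hyz : y ⬝ᵥ z = 0 := by rw [dotProduct_comm]; exact hzy
          simp only [Matrix.sub_mulVec, Matrix.add_mulVec, Matrix.smul_mulVec,
            ← Matrix.mulVec_mulVec, vmv_mulVec, hxz, hyz, hzx, hzy,
            Matrix.mulVec_smul, Matrix.mulVec_sub, Matrix.mulVec_add,
            zero_smul, smul_zero, sub_zero, zero_sub, Matrix.mulVec_zero,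
            dotProduct_sub, dotProduct_add, dotProduct_neg, dotProduct_smul, smul_eq_mul,
            dotProduct_zero]
          ring
        rw [mul_smul_comm, trace_smul, mul_vmv, trace_vmv, smul_eq_mul]
        rw [dotProduct_comm] at hUz
        rw [hUz, mul_zero]
      · have hval : ((c • vecMulVec z z)ᵀ * (c • vecMulVec z z)).trace
            = c ^ 2 * (z ⬝ᵥ z) ^ 2 := by
          simp only [transpose_smul, vmv_transpose, smul_mul_assoc, mul_smul_comm, vmv_vmv,
            smul_smul, trace_smul, trace_vmv, smul_eq_mul]
          ring
        rw [hval, hc, div_pow, Real.sq_sqrt hE0, div_mul_cancel₀]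
        exact pow_ne_zero 2 (ne_of_gt hzz)
  -- assemble the final matrix
  refine ⟨U₀ + R, by rw [transpose_add, hUt, hRt], ?_, ?_⟩
  · rw [transpose_add, add_mul, mul_add, mul_add, trace_add, trace_add, trace_add, hUt, hRt]
    have h1 : (U₀ * U₀).trace = (U₀ᵀ * U₀).trace := by rw [hUt]
    have h2 : (R * R).trace = (Rᵀ * R).trace := by rw [hRt]
    have h3 : (R * U₀).trace = (U₀ * R).trace := trace_mul_comm _ _
    rw [h1, h2, h3, hRz, hRn]
    linarith [hNE, hWn, hnorm]
  · have hUx' : (U₀ + R) *ᵥ x = W *ᵥ x := by rw [Matrix.add_mulVec, hUx, hRx, add_zero]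
    have hUy' : (U₀ + R) *ᵥ y = -(W *ᵥ y) := by rw [Matrix.add_mulVec, hUy, hRy, add_zero]
    rw [hBeq, qf_sym A (U₀ + R) (by rw [transpose_add, hUt, hRt]) x y α β,
      qf_skew A W x y α β, hUx', hUy']
    simp only [Matrix.mulVec_neg, dotProduct_neg, neg_dotProduct, neg_neg]

end helpers

theorem stmt_4 (n : ℕ) (A B : Matrix (Fin n) (Fin n) ℝ)
    (hA : Aᵀ = A) (hB : Bᵀ = B) (hrB : B.rank ≤ 2)
    (W : Matrix (Fin n) (Fin n) ℝ) (hW : Wᵀ = -W) (hWn : frobNorm W = 1) :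
    ∃ U : Matrix (Fin n) (Fin n) ℝ, Uᵀ = U ∧ frobNorm U = 1 ∧
      (A * U * B * U).trace = (A * W * B * Wᵀ).trace := by
  have htr : (Wᵀ * W).trace = 1 := by
    rw [frobNorm] at hWn
    exact Real.sqrt_eq_one.mp hWn
  have hn : 2 ≤ n := by
    by_contra hlt
    push_neg at hlt
    have hW0 : W = 0 := by
      ext i j
      have hij : i = j := by
        apply Fin.ext
        omega
      subst hij
      have := congrFun (congrFun hW i) i
      simp only [transpose_apply, Matrix.neg_apply] at this
      simp only [Matrix.zero_apply]
      linarith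
    rw [hW0] at htr
    simp at htr
  have hH : B.IsHermitian := by
    rw [Matrix.IsHermitian]
    ext i j
    simp only [conjTranspose_apply, star_trivial]
    exact congrFun (congrFun hB i) j
  set μ := hH.eigenvalues with hμ
  set V : Matrix (Fin n) (Fin n) ℝ := (hH.eigenvectorUnitary : Matrix (Fin n) (Fin n) ℝ) with hV
  have hspec := hH.spectral_theorem
  have hentry : ∀ i j, B i j = ∑ k, μ k * (V i k * V j k) := by
    intro i j
    conv_lhs => rw [hspec]
    simp [Matrix.mul_apply, Matrix.diagonal_apply, Finset.sum_mul, Finset.mul_sum,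
      conjTranspose_apply, Finset.sum_ite_eq, star_trivial]
    refine Finset.sum_congr rfl fun k _ => ?_
    rw [hV]
    simp only [Matrix.IsHermitian.eigenvectorUnitary_apply]
    ring
  have hvv : ∀ k l, (fun r => V r k) ⬝ᵥ (fun r => V r l) = if k = l then (1:ℝ) else 0 := by
    intro k l
    have hu : star V * V = 1 := Matrix.mem_unitaryGroup_iff'.mp hH.eigenvectorUnitary.2
    have := congrFun (congrFun hu k) l
    simp only [Matrix.mul_apply, Matrix.one_apply, star_apply, conjTranspose_apply,
      star_trivial] at this
    simpa [dotProduct] using this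
  set s := Finset.univ.filter (fun k => μ k ≠ 0) with hs
  have hcard : s.card ≤ 2 := by
    have hr := hH.rank_eq_card_non_zero_eigs
    rw [hr, Fintype.card_subtype] at hrB
    exact hrB
  obtain ⟨t, hst, -, htcard⟩ :=
    Finset.exists_subsuperset_card_eq (Finset.subset_univ s) hcard (by simp [hn])
  obtain ⟨i, j, hij, htij⟩ := Finset.card_eq_two.mp htcard
  have hμz : ∀ k, k ∉ t → μ k = 0 := by
    intro k hk
    by_contra h
    exact hk (hst (Finset.mem_filter.mpr ⟨Finset.mem_univ k, h⟩))
  have hBeq : B = μ i • vecMulVec (fun r => V r i) (fun r => V r i)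
      + μ j • vecMulVec (fun r => V r j) (fun r => V r j) := by
    ext a b
    rw [hentry a b,
      ← Finset.sum_subset (Finset.subset_univ t) (fun k _ hk => by rw [hμz k hk]; ring),
      htij, Finset.sum_pair hij]
    simp only [Matrix.add_apply, Matrix.smul_apply, vecMulVec_apply, smul_eq_mul]
  obtain ⟨U, hUt, hUn, hUtr⟩ := key A B (fun r => V r i) (fun r => V r j)
    (by simpa using hvv i i) (by simpa using hvv j j) (by simpa [hij] using hvv i j)
    (μ i) (μ j) hBeq W hW htr
  exact ⟨U, hUt, by rw [frobNorm, hUn]; exact Real.sqrt_one, hUtr⟩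
end

section
/- Let A, B be 2×2 real symmetric matrices and let W₀ := (1/√2)·[[0,1],[−1,0]]. Then inf E(A,B) ≤ trace(A·W₀·B·W₀ᵀ) ≤ sup E(A,B). -/
open Matrix

def Eset {n : ℕ} (A B : Matrix (Fin n) (Fin n) ℝ) : Set ℝ :=
  {t | ∃ U : Matrix (Fin n) (Fin n) ℝ, Uᵀ = U ∧ frobNorm U = 1 ∧ t = (A * U * B * U).trace}

noncomputable def W₀ : Matrix (Fin 2) (Fin 2) ℝ :=
  (Real.sqrt 2)⁻¹ • !![0, 1; -1, 0]

lemma exists_cs (β γ δ : ℝ) (h : δ^2 ≤ β^2 + γ^2) :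
    ∃ c s : ℝ, c^2 + s^2 = 1 ∧ β*(2*c^2 - 1) + γ*(2*(c*s)) = -δ := by
  rcases eq_or_lt_of_le (by positivity : (0:ℝ) ≤ β^2 + γ^2) with hρ | hρ
  · have hβ : β = 0 := by nlinarith
    have hγ : γ = 0 := by nlinarith
    have hδ : δ = 0 := by nlinarith
    exact ⟨1, 0, by norm_num, by simp [hβ, hγ, hδ]⟩
  · have hρ0 : β^2 + γ^2 ≠ 0 := ne_of_gt hρ
    have hwnn : 0 ≤ β^2 + γ^2 - δ^2 := by linarith
    set w := Real.sqrt (β^2 + γ^2 - δ^2) with hwdef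
    have hw : w^2 = β^2 + γ^2 - δ^2 := Real.sq_sqrt hwnn
    set C := (-δ*β - γ*w)/(β^2+γ^2) with hCdef
    set S := (-δ*γ + β*w)/(β^2+γ^2) with hSdef
    have hCS : C^2 + S^2 = 1 := by
      rw [hCdef, hSdef]
      field_simp
      linear_combination (β^2+γ^2) * hw
    have hCSe : β*C + γ*S = -δ := by
      rw [hCdef, hSdef]
      field_simp
      ring
    have hC1 : -1 ≤ C := by nlinarith [sq_nonneg S, sq_nonneg (C+1)]
    rcases eq_or_lt_of_le hC1 with hC | hC
    · have hS : S = 0 := by nlinarith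
      refine ⟨0, 1, by norm_num, ?_⟩
      rw [← hC, hS] at hCSe
      norm_num at hCSe ⊢
      linarith
    · have h1C : 0 < 1 + C := by linarith
      set c := Real.sqrt ((1+C)/2) with hcdef
      have hc2 : c^2 = (1+C)/2 := Real.sq_sqrt (by linarith)
      have hcpos : 0 < c := Real.sqrt_pos.mpr (by linarith)
      refine ⟨c, S/(2*c), ?_, ?_⟩
      · have hs2 : (S/(2*c))^2 = (1-C)/2 := by
          field_simp
          nlinarith [hc2, hCS]
        rw [hc2, hs2]; ring
      · have hcs : 2*(c*(S/(2*c))) = S := by field_simp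
        have h2c : 2*c^2 - 1 = C := by rw [hc2]; ring
        rw [h2c, hcs]; exact hCSe

lemma tb (a b u w : ℝ) (hu : u^2 ≤ 1) (hw : w^2 ≤ 1) :
    -(|a| * |b|) ≤ a*u*b*w ∧ a*u*b*w ≤ |a| * |b| := by
  have hu' : |u| ≤ 1 := by nlinarith [sq_abs u, abs_nonneg u]
  have hw' : |w| ≤ 1 := by nlinarith [sq_abs w, abs_nonneg w]
  have hAB : 0 ≤ |a| * |b| := mul_nonneg (abs_nonneg a) (abs_nonneg b)
  have huw : |u| * |w| ≤ 1 := by nlinarith [abs_nonneg u, abs_nonneg w]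
  have h1 : |a*u*b*w| ≤ |a| * |b| := by
    have he : |a*u*b*w| = (|a| * |b|)*(|u| * |w|) := by
      rw [abs_mul, abs_mul, abs_mul]; ring
    rw [he]
    exact mul_le_of_le_one_right hAB huw
  exact ⟨by linarith [neg_abs_le (a*u*b*w)], by linarith [le_abs_self (a*u*b*w)]⟩

lemma entry_sq_le (U : Matrix (Fin 2) (Fin 2) ℝ) (h : frobNorm U = 1) :
    ∀ i j, (U i j)^2 ≤ 1 := by
  have h0 : (Uᵀ*U).trace = 1 := Real.sqrt_eq_one.mp h
  simp [Matrix.trace, Matrix.mul_apply, Fin.sum_univ_two, Matrix.diag] at h0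
  have h00 : (U 0 0)^2 ≤ 1 := by nlinarith [sq_nonneg (U 0 1), sq_nonneg (U 1 0), sq_nonneg (U 1 1)]
  have h01 : (U 0 1)^2 ≤ 1 := by nlinarith [sq_nonneg (U 0 0), sq_nonneg (U 1 0), sq_nonneg (U 1 1)]
  have h10 : (U 1 0)^2 ≤ 1 := by nlinarith [sq_nonneg (U 0 0), sq_nonneg (U 0 1), sq_nonneg (U 1 1)]
  have h11 : (U 1 1)^2 ≤ 1 := by nlinarith [sq_nonneg (U 0 0), sq_nonneg (U 0 1), sq_nonneg (U 1 0)]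
  intro i j
  fin_cases i <;> fin_cases j <;> assumption

noncomputable def bnd (A B : Matrix (Fin 2) (Fin 2) ℝ) : ℝ :=
  ∑ i : Fin 2, ∑ j : Fin 2, ∑ k : Fin 2, ∑ l : Fin 2, |A i j| * |B k l|

lemma Eset_abs_bound (A B : Matrix (Fin 2) (Fin 2) ℝ) :
    ∀ t ∈ Eset A B, -bnd A B ≤ t ∧ t ≤ bnd A B := by
  rintro t ⟨U, hU, hfr, rfl⟩
  have hsq := entry_sq_le U hfr
  have h0000 := tb (A 0 0) (B 0 0) (U 0 0) (U 0 0) (hsq 0 0) (hsq 0 0)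
  have h0001 := tb (A 0 0) (B 0 1) (U 0 0) (U 1 0) (hsq 0 0) (hsq 1 0)
  have h0010 := tb (A 0 0) (B 1 0) (U 0 1) (U 0 0) (hsq 0 1) (hsq 0 0)
  have h0011 := tb (A 0 0) (B 1 1) (U 0 1) (U 1 0) (hsq 0 1) (hsq 1 0)
  have h0100 := tb (A 0 1) (B 0 0) (U 1 0) (U 0 0) (hsq 1 0) (hsq 0 0)
  have h0101 := tb (A 0 1) (B 0 1) (U 1 0) (U 1 0) (hsq 1 0) (hsq 1 0)
  have h0110 := tb (A 0 1) (B 1 0) (U 1 1) (U 0 0) (hsq 1 1) (hsq 0 0)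
  have h0111 := tb (A 0 1) (B 1 1) (U 1 1) (U 1 0) (hsq 1 1) (hsq 1 0)
  have h1000 := tb (A 1 0) (B 0 0) (U 0 0) (U 0 1) (hsq 0 0) (hsq 0 1)
  have h1001 := tb (A 1 0) (B 0 1) (U 0 0) (U 1 1) (hsq 0 0) (hsq 1 1)
  have h1010 := tb (A 1 0) (B 1 0) (U 0 1) (U 0 1) (hsq 0 1) (hsq 0 1)
  have h1011 := tb (A 1 0) (B 1 1) (U 0 1) (U 1 1) (hsq 0 1) (hsq 1 1)
  have h1100 := tb (A 1 1) (B 0 0) (U 1 0) (U 0 1) (hsq 1 0) (hsq 0 1)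
  have h1101 := tb (A 1 1) (B 0 1) (U 1 0) (U 1 1) (hsq 1 0) (hsq 1 1)
  have h1110 := tb (A 1 1) (B 1 0) (U 1 1) (U 0 1) (hsq 1 1) (hsq 0 1)
  have h1111 := tb (A 1 1) (B 1 1) (U 1 1) (U 1 1) (hsq 1 1) (hsq 1 1)
  simp only [bnd, Matrix.trace, Matrix.mul_apply, Fin.sum_univ_two, Matrix.diag]
  constructor <;>
    linarith [h0000.1, h0001.1, h0010.1, h0011.1, h0100.1, h0101.1, h0110.1, h0111.1,
      h1000.1, h1001.1, h1010.1, h1011.1, h1100.1, h1101.1, h1110.1, h1111.1,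
      h0000.2, h0001.2, h0010.2, h0011.2, h0100.2, h0101.2, h0110.2, h0111.2,
      h1000.2, h1001.2, h1010.2, h1011.2, h1100.2, h1101.2, h1110.2, h1111.2]

lemma key_mem (A B : Matrix (Fin 2) (Fin 2) ℝ) (hA : Aᵀ = A) (hB : Bᵀ = B) :
    (A * W₀ * B * W₀ᵀ).trace ∈ Eset A B := by
  have hA' : A 1 0 = A 0 1 := by
    have := congrFun (congrFun hA 1) 0
    simpa [Matrix.transpose_apply] using this.symm
  have hB' : B 1 0 = B 0 1 := by
    have := congrFun (congrFun hB 1) 0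
    simpa [Matrix.transpose_apply] using this.symm
  set a := A 0 0 with ha
  set b := A 0 1 with hb
  set d := A 1 1 with hd
  set p := B 0 0 with hp
  set q := B 0 1 with hq
  set r := B 1 1 with hr
  have hδ : (((a-d)*(p-r) + 4*b*q)/2)^2 ≤ (((a-d)*(p-r) - 4*b*q)/2)^2 + (q*(a-d)+b*(p-r))^2 := by
    nlinarith [sq_nonneg (q*(a-d) - b*(p-r))]
  obtain ⟨c, s, h1, h2⟩ := exists_cs _ _ _ hδ
  have h2' : ((Real.sqrt 2)⁻¹:ℝ) * (Real.sqrt 2)⁻¹ = 1/2 := by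
    rw [← mul_inv, Real.mul_self_sqrt (by norm_num : (0:ℝ) ≤ 2)]
    norm_num
  have hT : (!![c, s; s, -c] : Matrix (Fin 2) (Fin 2) ℝ)ᵀ = !![c, s; s, -c] := by
    ext i j
    fin_cases i <;> fin_cases j <;> simp
  have hW : W₀ᵀ = (Real.sqrt 2)⁻¹ • (!![0, -1; 1, 0] : Matrix (Fin 2) (Fin 2) ℝ) := by
    rw [W₀, Matrix.transpose_smul]
    congr 1
    ext i j
    fin_cases i <;> fin_cases j <;> simp
  refine ⟨(Real.sqrt 2)⁻¹ • !![c, s; s, -c], ?_, ?_, ?_⟩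
  · rw [Matrix.transpose_smul, hT]
  · have htr : (((Real.sqrt 2)⁻¹ • !![c, s; s, -c])ᵀ *
        ((Real.sqrt 2)⁻¹ • !![c, s; s, -c]) : Matrix (Fin 2) (Fin 2) ℝ).trace = 1 := by
      rw [Matrix.transpose_smul, hT]
      simp [Matrix.trace, Matrix.mul_apply, Fin.sum_univ_two, Matrix.diag]
      nlinarith [h1, h2']
    unfold frobNorm
    rw [htr, Real.sqrt_one]
  · rw [hW, W₀]
    simp [Matrix.trace, Matrix.mul_apply, Fin.sum_univ_two, Matrix.diag]
    rw [hA', hB']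
    linear_combination (-((Real.sqrt 2)⁻¹*(Real.sqrt 2)⁻¹) * (a*r + 2*b*q + d*p)) * h1 -
      ((Real.sqrt 2)⁻¹*(Real.sqrt 2)⁻¹) * h2

theorem stmt_7 (A B : Matrix (Fin 2) (Fin 2) ℝ) (hA : Aᵀ = A) (hB : Bᵀ = B) :
    sInf (Eset A B) ≤ (A * W₀ * B * W₀ᵀ).trace ∧
      (A * W₀ * B * W₀ᵀ).trace ≤ sSup (Eset A B) := by
  have hmem := key_mem A B hA hB
  have hb := Eset_abs_bound A B
  have hbb : BddBelow (Eset A B) := ⟨-bnd A B, fun t ht => (hb t ht).1⟩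
  have hba : BddAbove (Eset A B) := ⟨bnd A B, fun t ht => (hb t ht).2⟩
  exact ⟨csInf_le hbb hmem, le_csSup hba hmem⟩
end

section
/- Let A, B be 3×3 real symmetric matrices. Then for every skew-symmetric matrix W ∈ K³ with ‖W‖_F = 1 there exists a symmetric matrix U ∈ S³ with ‖U‖_F = 1 such that trace(A·U·B·U) = trace(A·W·B·Wᵀ). -/
open Matrix

section toolkit
variable {n : Type*} [Fintype n] [DecidableEq n]

lemma mul_vecMulVec' (M : Matrix n n ℝ) (p q : n → ℝ) :
    M * vecMulVec p q = vecMulVec (M *ᵥ p) q := by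
  ext i j
  simp only [Matrix.mul_apply, vecMulVec_apply, mulVec, dotProduct, Finset.mul_sum, Finset.sum_mul]
  exact Finset.sum_congr rfl fun k _ => by ring

lemma vecMulVec_mul_vecMulVec' (p q r s : n → ℝ) :
    vecMulVec p q * vecMulVec r s = (q ⬝ᵥ r) • vecMulVec p s := by
  ext i j; simp [Matrix.mul_apply, vecMulVec_apply, dotProduct, Finset.mul_sum, Finset.sum_mul]
  ring_nf
  exact Finset.sum_congr rfl fun k _ => by ring

lemma trace_vecMulVec' (p q : n → ℝ) : (vecMulVec p q).trace = p ⬝ᵥ q := by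
  simp [Matrix.trace, Matrix.diag, vecMulVec_apply, dotProduct]

lemma trace_A_vecMulVec (M : Matrix n n ℝ) (p q : n → ℝ) :
    (M * vecMulVec p q).trace = q ⬝ᵥ (M *ᵥ p) := by
  rw [mul_vecMulVec', trace_vecMulVec', dotProduct_comm]

lemma traceForm (M N : Matrix n n ℝ) (p q r s : n → ℝ) :
    (M * vecMulVec p q * N * vecMulVec r s).trace
      = (q ⬝ᵥ (N *ᵥ r)) * (s ⬝ᵥ (M *ᵥ p)) := by
  have : vecMulVec p q * N * vecMulVec r s = ((q ⬝ᵥ (N *ᵥ r)) * 1) • vecMulVec p s := by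
    rw [Matrix.mul_assoc, mul_vecMulVec' N r s, vecMulVec_mul_vecMulVec']
    simp
  rw [Matrix.mul_assoc M, Matrix.mul_assoc M]
  rw [this, Matrix.mul_smul, trace_smul, trace_A_vecMulVec]
  simp only [smul_eq_mul, mul_one]

lemma vecMulVec_transpose' (p q : n → ℝ) : (vecMulVec p q)ᵀ = vecMulVec q p := by
  ext i j; simp [vecMulVec_apply, mul_comm]

end toolkit

lemma half_angle (X Y : ℝ) (h : X^2 + Y^2 = 1) :
    ∃ C S : ℝ, C^2 + S^2 = 1 ∧ C^2 - S^2 = X ∧ 2*S*C = Y := by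
  by_cases hX : X = -1
  · refine ⟨0, 1, by norm_num, by nlinarith, by nlinarith⟩
  · have hXge : -1 ≤ X := by nlinarith [sq_nonneg Y]
    have hX1 : -1 < X := lt_of_le_of_ne hXge (fun e => hX e.symm)
    have h1X : 0 < 1 + X := by linarith
    set C := Real.sqrt ((1+X)/2) with hC
    have hC2 : C^2 = (1+X)/2 := Real.sq_sqrt (by linarith)
    have hCpos : 0 < C := Real.sqrt_pos.mpr (by linarith)
    refine ⟨C, Y/(2*C), ?_, ?_, ?_⟩
    · field_simp
      nlinarith [hC2]
    · field_simp
      nlinarith [hC2]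
    · field_simp
lemma circ (k E t : ℝ) (h : t^2 ≤ k^2 + E^2) :
    ∃ X Y : ℝ, X^2 + Y^2 = 1 ∧ k*X - E*Y = t := by
  by_cases hr : k^2 + E^2 = 0
  · have hk : k = 0 := by nlinarith [sq_nonneg k, sq_nonneg E]
    have hE : E = 0 := by nlinarith [sq_nonneg k, sq_nonneg E]
    have ht : t = 0 := by nlinarith
    exact ⟨1, 0, by norm_num, by simp [hk, hE, ht]⟩
  · have hrpos : 0 < k^2 + E^2 := lt_of_le_of_ne (by positivity) (Ne.symm hr)
    set r := Real.sqrt (k^2 + E^2 - t^2) with hrdef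
    have hr2 : r^2 = k^2 + E^2 - t^2 := Real.sq_sqrt (by linarith)
    refine ⟨(t*k - E*r)/(k^2+E^2), -(t*E + k*r)/(k^2+E^2), ?_, ?_⟩
    · field_simp
      nlinarith [hr2]
    · field_simp
      nlinarith [hr2]


set_option maxHeartbeats 1000000 in
lemma decompW (W : Matrix (Fin 3) (Fin 3) ℝ) (hW : Wᵀ = -W) (hWn : frobNorm W = 1) :
    ∃ (c : ℝ) (u v : Fin 3 → ℝ), c^2 = 1/2 ∧ u ⬝ᵥ u = 1 ∧ v ⬝ᵥ v = 1 ∧ u ⬝ᵥ v = 0 ∧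
      W = c • (vecMulVec u v - vecMulVec v u) := by
  have hent : ∀ i j, W j i = - W i j := fun i j => by
    have := congrFun (congrFun hW i) j
    simpa [Matrix.transpose_apply] using this
  set x := W 2 1 with hx
  set y := W 0 2 with hy
  set z := W 1 0 with hz
  have h00 : W 0 0 = 0 := by have := hent 0 0; linarith
  have h11 : W 1 1 = 0 := by have := hent 1 1; linarith
  have h22 : W 2 2 = 0 := by have := hent 2 2; linarith
  have h01 : W 0 1 = -z := by have := hent 0 1; linarith
  have h12 : W 1 2 = -x := by have := hent 1 2; linarith
  have h20 : W 2 0 = -y := by have := hent 2 0; linarith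
  have htr : (Wᵀ * W).trace = 2*(x^2+y^2+z^2) := by
    rw [Matrix.trace_fin_three]
    simp only [Matrix.mul_apply, Matrix.transpose_apply, Fin.sum_univ_three,
      h00, h11, h22, h01, h12, h20]
    ring
  have hn : x^2 + y^2 + z^2 = 1/2 := by
    have h1 : (Wᵀ * W).trace = 1 := Real.sqrt_eq_one.mp hWn
    linarith [htr.symm.trans h1]
  by_cases hd : x^2 + y^2 = 0
  · have hx0 : x = 0 := by nlinarith [sq_nonneg x, sq_nonneg y]
    have hy0 : y = 0 := by nlinarith [sq_nonneg x, sq_nonneg y]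
    refine ⟨-z, ![1,0,0], ![0,1,0], by nlinarith, by simp [dotProduct, Fin.sum_univ_three],
      by simp [dotProduct, Fin.sum_univ_three], by simp [dotProduct, Fin.sum_univ_three], ?_⟩
    ext i j
    fin_cases i <;> fin_cases j <;>
      simp [vecMulVec_apply, h00, h11, h22, h01, h12, h20, hx0, hy0] <;>
      linarith [hx, hy, hz, hx0, hy0]
  · have hd2 : 0 < x^2 + y^2 := lt_of_le_of_ne (by positivity) (Ne.symm hd)
    set d := Real.sqrt (x^2+y^2) with hddef
    have hdsq : d^2 = x^2+y^2 := Real.sq_sqrt (by positivity)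
    have hdpos : 0 < d := Real.sqrt_pos.mpr hd2
    set c := Real.sqrt (x^2+y^2+z^2) with hcdef
    have hcsq : c^2 = x^2+y^2+z^2 := Real.sq_sqrt (by positivity)
    have hcpos : 0 < c := Real.sqrt_pos.mpr (by nlinarith)
    have hdne : d ≠ 0 := ne_of_gt hdpos
    have hcne : c ≠ 0 := ne_of_gt hcpos
    obtain ⟨u, hu0, hu1, hu2⟩ : ∃ u : Fin 3 → ℝ, u 0 = -x*z/(c*d) ∧ u 1 = -y*z/(c*d) ∧ u 2 = d/c :=
      ⟨![-x*z/(c*d), -y*z/(c*d), d/c], rfl, rfl, rfl⟩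
    obtain ⟨v, hv0, hv1, hv2⟩ : ∃ v : Fin 3 → ℝ, v 0 = -y/d ∧ v 1 = x/d ∧ v 2 = 0 :=
      ⟨![-y/d, x/d, 0], rfl, rfl, rfl⟩
    have key : ∀ i j, (c • (vecMulVec u v - vecMulVec v u)) i j = c * (u i * v j - v i * u j) :=
      fun i j => by simp [vecMulVec_apply, mul_sub]
    refine ⟨c, u, v, by rw [hcsq]; exact hn, ?_, ?_, ?_, ?_⟩
    · simp only [dotProduct, Fin.sum_univ_three, hu0, hu1, hu2]
      field_simp
      linear_combination (d^2-z^2) * hdsq - d^2 * hcsq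
    · simp only [dotProduct, Fin.sum_univ_three, hv0, hv1, hv2]
      field_simp
      nlinarith [hdsq]
    · simp only [dotProduct, Fin.sum_univ_three, hu0, hu1, hu2, hv0, hv1, hv2]
      field_simp
      ring
    · ext i j
      rw [key]
      fin_cases i <;> fin_cases j
      · show W 0 0 = c * (u 0 * v 0 - v 0 * u 0); rw [h00]; ring
      · show W 0 1 = c * (u 0 * v 1 - v 0 * u 1)
        rw [h01, hu0, hu1, hv0, hv1]; field_simp; linear_combination (-z)*hdsq
      · show W 0 2 = c * (u 0 * v 2 - v 0 * u 2)
        rw [← hy, hu0, hu2, hv0, hv2]; field_simp; ring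
      · show W 1 0 = c * (u 1 * v 0 - v 1 * u 0)
        rw [← hz, hu0, hu1, hv0, hv1]; field_simp; linear_combination z*hdsq
      · show W 1 1 = c * (u 1 * v 1 - v 1 * u 1); rw [h11]; ring
      · show W 1 2 = c * (u 1 * v 2 - v 1 * u 2)
        rw [h12, hu1, hu2, hv1, hv2]; field_simp; ring
      · show W 2 0 = c * (u 2 * v 0 - v 2 * u 0)
        rw [h20, hu0, hu2, hv0, hv2]; field_simp; ring
      · show W 2 1 = c * (u 2 * v 1 - v 2 * u 1)
        rw [← hx, hu1, hu2, hv1, hv2]; field_simp; ring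
      · show W 2 2 = c * (u 2 * v 2 - v 2 * u 2); rw [h22]; ring

set_option maxHeartbeats 1000000 in
theorem stmt_8 (A B : Matrix (Fin 3) (Fin 3) ℝ) (hA : Aᵀ = A) (hB : Bᵀ = B)
    (W : Matrix (Fin 3) (Fin 3) ℝ) (hW : Wᵀ = -W) (hWn : frobNorm W = 1) :
    ∃ U : Matrix (Fin 3) (Fin 3) ℝ, Uᵀ = U ∧ frobNorm U = 1 ∧
      (A * U * B * U).trace = (A * W * B * Wᵀ).trace := by
  obtain ⟨c, u, v, hc2, huu, hvv, huv, hWuv⟩ := decompW W hW hWn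
  have hvu : v ⬝ᵥ u = 0 := by rw [dotProduct_comm]; exact huv
  have hAvu : v ⬝ᵥ A *ᵥ u = u ⬝ᵥ A *ᵥ v := by
    rw [dotProduct_mulVec, ← mulVec_transpose, hA, dotProduct_comm]
  have hBvu : v ⬝ᵥ B *ᵥ u = u ⬝ᵥ B *ᵥ v := by
    rw [dotProduct_mulVec, ← mulVec_transpose, hB, dotProduct_comm]
  have hineq : ((((u ⬝ᵥ A *ᵥ u) * (v ⬝ᵥ B *ᵥ v) + (v ⬝ᵥ A *ᵥ v) * (u ⬝ᵥ B *ᵥ u) + 2*(u ⬝ᵥ A *ᵥ v)*(u ⬝ᵥ B *ᵥ v)) - ((u ⬝ᵥ A *ᵥ u) * (u ⬝ᵥ B *ᵥ u) + (v ⬝ᵥ A *ᵥ v) * (v ⬝ᵥ B *ᵥ v) - 2*(u ⬝ᵥ A *ᵥ v)*(u ⬝ᵥ B *ᵥ v)))/2 - 4*(u ⬝ᵥ A *ᵥ v)*(u ⬝ᵥ B *ᵥ v))^2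
      ≤ ((((u ⬝ᵥ A *ᵥ u) * (v ⬝ᵥ B *ᵥ v) + (v ⬝ᵥ A *ᵥ v) * (u ⬝ᵥ B *ᵥ u) + 2*(u ⬝ᵥ A *ᵥ v)*(u ⬝ᵥ B *ᵥ v)) - ((u ⬝ᵥ A *ᵥ u) * (u ⬝ᵥ B *ᵥ u) + (v ⬝ᵥ A *ᵥ v) * (v ⬝ᵥ B *ᵥ v) - 2*(u ⬝ᵥ A *ᵥ v)*(u ⬝ᵥ B *ᵥ v)))/2)^2
        + ((u ⬝ᵥ A *ᵥ v)*((u ⬝ᵥ B *ᵥ u) - (v ⬝ᵥ B *ᵥ v)) + (u ⬝ᵥ B *ᵥ v)*((u ⬝ᵥ A *ᵥ u) - (v ⬝ᵥ A *ᵥ v)))^2 := by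
    nlinarith [sq_nonneg ((u ⬝ᵥ A *ᵥ v)*((u ⬝ᵥ B *ᵥ u) - (v ⬝ᵥ B *ᵥ v)) - (u ⬝ᵥ B *ᵥ v)*((u ⬝ᵥ A *ᵥ u) - (v ⬝ᵥ A *ᵥ v)))]
  obtain ⟨X, Y, hXY, hval⟩ := circ _ _ _ hineq
  obtain ⟨C, S, hCS, hX, hY⟩ := half_angle X Y hXY
  have key : C^2*((u ⬝ᵥ A *ᵥ u) * (v ⬝ᵥ B *ᵥ v) + (v ⬝ᵥ A *ᵥ v) * (u ⬝ᵥ B *ᵥ u) + 2*(u ⬝ᵥ A *ᵥ v)*(u ⬝ᵥ B *ᵥ v))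
      + S^2*((u ⬝ᵥ A *ᵥ u) * (u ⬝ᵥ B *ᵥ u) + (v ⬝ᵥ A *ᵥ v) * (v ⬝ᵥ B *ᵥ v) - 2*(u ⬝ᵥ A *ᵥ v)*(u ⬝ᵥ B *ᵥ v))
      - 2*S*C*((u ⬝ᵥ A *ᵥ v)*((u ⬝ᵥ B *ᵥ u) - (v ⬝ᵥ B *ᵥ v)) + (u ⬝ᵥ B *ᵥ v)*((u ⬝ᵥ A *ᵥ u) - (v ⬝ᵥ A *ᵥ v)))
      = (u ⬝ᵥ A *ᵥ u) * (v ⬝ᵥ B *ᵥ v) + (v ⬝ᵥ A *ᵥ v) * (u ⬝ᵥ B *ᵥ u) - 2*(u ⬝ᵥ A *ᵥ v)*(u ⬝ᵥ B *ᵥ v) := by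
    linear_combination
      ((((u ⬝ᵥ A *ᵥ u) * (v ⬝ᵥ B *ᵥ v) + (v ⬝ᵥ A *ᵥ v) * (u ⬝ᵥ B *ᵥ u) + 2*(u ⬝ᵥ A *ᵥ v)*(u ⬝ᵥ B *ᵥ v)) + ((u ⬝ᵥ A *ᵥ u) * (u ⬝ᵥ B *ᵥ u) + (v ⬝ᵥ A *ᵥ v) * (v ⬝ᵥ B *ᵥ v) - 2*(u ⬝ᵥ A *ᵥ v)*(u ⬝ᵥ B *ᵥ v)))/2) * hCS
      + ((((u ⬝ᵥ A *ᵥ u) * (v ⬝ᵥ B *ᵥ v) + (v ⬝ᵥ A *ᵥ v) * (u ⬝ᵥ B *ᵥ u) + 2*(u ⬝ᵥ A *ᵥ v)*(u ⬝ᵥ B *ᵥ v)) - ((u ⬝ᵥ A *ᵥ u) * (u ⬝ᵥ B *ᵥ u) + (v ⬝ᵥ A *ᵥ v) * (v ⬝ᵥ B *ᵥ v) - 2*(u ⬝ᵥ A *ᵥ v)*(u ⬝ᵥ B *ᵥ v)))/2) * hX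
      - ((u ⬝ᵥ A *ᵥ v)*((u ⬝ᵥ B *ᵥ u) - (v ⬝ᵥ B *ᵥ v)) + (u ⬝ᵥ B *ᵥ v)*((u ⬝ᵥ A *ᵥ u) - (v ⬝ᵥ A *ᵥ v))) * hY
      + hval
  obtain ⟨U, hUdef⟩ : ∃ U' : Matrix (Fin 3) (Fin 3) ℝ,
      U' = c • (S • vecMulVec u u - S • vecMulVec v v - C • vecMulVec u v - C • vecMulVec v u) :=
    ⟨_, rfl⟩
  have hUT : Uᵀ = U := by
    rw [hUdef]
    ext i j
    simp only [Matrix.transpose_apply, Matrix.smul_apply, Matrix.sub_apply, vecMulVec_apply,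
      smul_eq_mul]
    ring
  have hWT : Wᵀ = c • (vecMulVec v u - vecMulVec u v) := by
    rw [hWuv]
    ext i j
    simp only [Matrix.transpose_apply, Matrix.smul_apply, Matrix.sub_apply, vecMulVec_apply,
      smul_eq_mul]
    ring
  refine ⟨U, hUT, ?_, ?_⟩
  · show Real.sqrt ((Uᵀ * U).trace) = 1
    rw [hUT]
    have htr : (U * U).trace = 1 := by
      rw [hUdef]
      simp only [Matrix.smul_mul, Matrix.mul_smul, Matrix.sub_mul, Matrix.mul_sub,
        trace_smul, trace_sub, vecMulVec_mul_vecMulVec', trace_vecMulVec',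
        smul_eq_mul, huu, hvv, huv, hvu]
      ring_nf
      linear_combination (2*c^2)*hCS + 2*hc2
    rw [htr, Real.sqrt_one]
  · rw [hUdef, hWT, hWuv]
    simp only [Matrix.smul_mul, Matrix.mul_smul, Matrix.sub_mul, Matrix.mul_sub,
      trace_smul, trace_sub, traceForm, smul_eq_mul, hAvu, hBvu, huu, hvv, huv, hvu]
    linear_combination (c^2) * key
end

section
/- Let n ≥ 2 and let A, B be n×n real symmetric matrices. Suppose B is indefinite (B has at least one positive and at least one negative eigenvalue) and both the largest and the smallest eigenvalues of B have multiplicity 1 (one-dimensional eigenspaces). Then there exists μ₀ > 0 such that for all μ ≥ μ₀ the pair (A + μ·I, B) satisfies the weak interlacing property: inf E(A+μI, B) ≤ inf O(A+μI, B) and sup E(A+μI, B) ≥ sup O(A+μI, B). -/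
open Matrix

def Oset {n : ℕ} (A B : Matrix (Fin n) (Fin n) ℝ) : Set ℝ :=
  {t | ∃ W : Matrix (Fin n) (Fin n) ℝ, Wᵀ = -W ∧ frobNorm W = 1 ∧ t = (A * W * B * Wᵀ).trace}

open Finset

lemma frobNorm_eq_one_iff {n : ℕ} (M : Matrix (Fin n) (Fin n) ℝ) :
    frobNorm M = 1 ↔ ∑ i, ∑ j, M i j ^ 2 = 1 := by
  have ht : (Mᵀ * M).trace = ∑ i, ∑ j, M i j ^ 2 := by
    rw [Matrix.trace]
    rw [Finset.sum_comm (f := fun i j => M i j ^ 2)]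
    refine Finset.sum_congr rfl fun j _ => ?_
    simp [Matrix.mul_apply, Matrix.diag, sq]
  rw [frobNorm, ht, Real.sqrt_eq_one]

lemma entry_abs_le_one {n : ℕ} {M : Matrix (Fin n) (Fin n) ℝ}
    (h : ∑ i, ∑ j, M i j ^ 2 = 1) (i j : Fin n) : |M i j| ≤ 1 := by
  have h1 : M i j ^ 2 ≤ ∑ j', M i j' ^ 2 :=
    Finset.single_le_sum (f := fun j' => M i j' ^ 2) (fun _ _ => sq_nonneg _) (Finset.mem_univ j)
  have h2 : ∑ j', M i j' ^ 2 ≤ ∑ i', ∑ j', M i' j' ^ 2 :=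
    Finset.single_le_sum (f := fun i' => ∑ j', M i' j' ^ 2)
      (fun _ _ => Finset.sum_nonneg fun _ _ => sq_nonneg _) (Finset.mem_univ i)
  have : M i j ^ 2 ≤ 1 := by linarith [h1, h2, h]
  rw [abs_le]; constructor <;> nlinarith

lemma trace_bound {n : ℕ} (A B U V : Matrix (Fin n) (Fin n) ℝ)
    (hU : ∀ i j, |U i j| ≤ 1) (hV : ∀ i j, |V i j| ≤ 1) :
    |(A * U * B * V).trace| ≤ (∑ i, ∑ j, |A i j|) * (∑ i, ∑ j, |B i j|) := by
  have hAU : ∀ i k, |(A * U) i k| ≤ ∑ j, |A i j| := by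
    intro i k
    rw [Matrix.mul_apply]
    refine (Finset.abs_sum_le_sum_abs _ _).trans (Finset.sum_le_sum fun j _ => ?_)
    rw [abs_mul]
    calc |A i j| * |U j k| ≤ |A i j| * 1 := by
          exact mul_le_mul_of_nonneg_left (hU j k) (abs_nonneg _)
      _ = |A i j| := mul_one _
  have hX : ∀ i l, |(A * U * B) i l| ≤ (∑ j, |A i j|) * (∑ k, |B k l|) := by
    intro i l
    rw [Matrix.mul_apply]
    refine (Finset.abs_sum_le_sum_abs _ _).trans ?_
    rw [Finset.mul_sum]
    refine Finset.sum_le_sum fun k _ => ?_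
    rw [abs_mul]
    exact mul_le_mul_of_nonneg_right (hAU i k) (abs_nonneg _)
  have htr : (A * U * B * V).trace = ∑ i, ∑ l, (A * U * B) i l * V l i := by
    rw [Matrix.trace]
    refine Finset.sum_congr rfl fun i _ => ?_
    simp [Matrix.mul_apply, Matrix.diag]
  rw [htr]
  calc |∑ i, ∑ l, (A * U * B) i l * V l i|
      ≤ ∑ i, ∑ l, |(A * U * B) i l * V l i| := by
        refine (Finset.abs_sum_le_sum_abs _ _).trans (Finset.sum_le_sum fun i _ => ?_)
        exact Finset.abs_sum_le_sum_abs _ _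
    _ ≤ ∑ i, ∑ l, (∑ j, |A i j|) * (∑ k, |B k l|) := by
        refine Finset.sum_le_sum fun i _ => Finset.sum_le_sum fun l _ => ?_
        rw [abs_mul]
        calc |(A * U * B) i l| * |V l i| ≤ |(A * U * B) i l| * 1 :=
              mul_le_mul_of_nonneg_left (hV l i) (abs_nonneg _)
          _ = |(A * U * B) i l| := mul_one _
          _ ≤ (∑ j, |A i j|) * (∑ k, |B k l|) := hX i l
    _ = (∑ i, ∑ j, |A i j|) * (∑ i, ∑ j, |B i j|) := by
        rw [Finset.sum_mul]
        refine Finset.sum_congr rfl fun i _ => ?_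
        rw [← Finset.mul_sum, Finset.sum_comm]


lemma skew_row_bound {n : ℕ} (W : Matrix (Fin n) (Fin n) ℝ) (hW : Wᵀ = -W)
    (hW1 : ∑ i, ∑ j, W i j ^ 2 = 1) (v : Fin n → ℝ) (hv : ∑ i, v i ^ 2 = 1) :
    ∑ l, (∑ i, W l i * v i) ^ 2 ≤ 1 / 2 := by
  have hskew : ∀ i j, W j i = -W i j := by
    intro i j
    have := congrFun (congrFun hW i) j
    simpa [Matrix.transpose_apply] using this
  set u : Fin n → ℝ := fun l => ∑ i, W l i * v i with hu
  set s : ℝ := ∑ l, u l ^ 2 with hs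
  show s ≤ 1 / 2
  have huv : ∀ l, u l = ∑ i, W l i * v i := fun _ => rfl
  -- d = 0
  have hd : ∑ i, u i * v i = 0 := by
    have hT : ∑ i, u i * v i = ∑ i, ∑ j, W i j * v j * v i := by
      refine Finset.sum_congr rfl fun i _ => ?_
      rw [huv, Finset.sum_mul]
    have hT2 : ∑ i, ∑ j, W i j * v j * v i = -∑ i, ∑ j, W i j * v j * v i := by
      nth_rewrite 1 [Finset.sum_comm]
      rw [← Finset.sum_neg_distrib]
      refine Finset.sum_congr rfl fun i _ => ?_
      rw [← Finset.sum_neg_distrib]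
      refine Finset.sum_congr rfl fun j _ => ?_
      rw [hskew i j]; ring
    rw [hT]; linarith [hT2]
  have hA : ∑ i, ∑ j, W i j * (u i * v j) = s := by
    rw [hs]
    refine Finset.sum_congr rfl fun i _ => ?_
    calc ∑ j, W i j * (u i * v j) = u i * ∑ j, W i j * v j := by
          rw [Finset.mul_sum]; exact Finset.sum_congr rfl fun j _ => by ring
      _ = u i * u i := by rw [← huv]
      _ = u i ^ 2 := by ring
  have hB : ∑ i, ∑ j, W i j * (v i * u j) = -s := by
    rw [Finset.sum_comm, hs, ← Finset.sum_neg_distrib]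
    refine Finset.sum_congr rfl fun j _ => ?_
    calc ∑ i, W i j * (v i * u j) = u j * ∑ i, W i j * v i := by
          rw [Finset.mul_sum]; exact Finset.sum_congr rfl fun i _ => by ring
      _ = u j * ∑ i, -(W j i * v i) := by
          congr 1; exact Finset.sum_congr rfl fun i _ => by rw [hskew j i]; ring
      _ = u j * -(∑ i, W j i * v i) := by rw [Finset.sum_neg_distrib]
      _ = u j * -(u j) := by rw [← huv]
      _ = -(u j ^ 2) := by ring
  have hC : ∑ i, ∑ j, (u i * v j) ^ 2 = s := by
    rw [hs]
    refine Finset.sum_congr rfl fun i _ => ?_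
    simp only [mul_pow, ← Finset.mul_sum, hv, mul_one]
  have hD : ∑ i, ∑ j, (v i * u j) ^ 2 = s := by
    rw [hs, Finset.sum_comm]
    refine Finset.sum_congr rfl fun j _ => ?_
    have : ∀ i : Fin n, (v i * u j) ^ 2 = u j ^ 2 * v i ^ 2 := fun i => by ring
    simp only [this, ← Finset.mul_sum, hv, mul_one]
  have hE : ∑ i, ∑ j, (u i * v j) * (v i * u j) = 0 := by
    have hd' : ∑ j, v j * u j = 0 := by
      rw [← hd]; exact Finset.sum_congr rfl fun j _ => by ring
    refine Finset.sum_eq_zero fun i _ => ?_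
    calc ∑ j, (u i * v j) * (v i * u j) = (u i * v i) * ∑ j, v j * u j := by
          rw [Finset.mul_sum]; exact Finset.sum_congr rfl fun j _ => by ring
      _ = 0 := by rw [hd', mul_zero]
  have hpos : (0:ℝ) ≤ ∑ i, ∑ j, (W i j - u i * v j + v i * u j) ^ 2 :=
    Finset.sum_nonneg fun i _ => Finset.sum_nonneg fun j _ => sq_nonneg _
  have hexp : ∑ i, ∑ j, (W i j - u i * v j + v i * u j) ^ 2
      = (∑ i, ∑ j, W i j ^ 2) + (∑ i, ∑ j, (u i * v j) ^ 2) + (∑ i, ∑ j, (v i * u j) ^ 2)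
        - 2 * (∑ i, ∑ j, W i j * (u i * v j)) + 2 * (∑ i, ∑ j, W i j * (v i * u j))
        - 2 * (∑ i, ∑ j, (u i * v j) * (v i * u j)) := by
    have hpt : ∀ i j : Fin n, (W i j - u i * v j + v i * u j) ^ 2
        = W i j ^ 2 + (u i * v j) ^ 2 + (v i * u j) ^ 2 - 2 * (W i j * (u i * v j))
          + 2 * (W i j * (v i * u j)) - 2 * ((u i * v j) * (v i * u j)) := by
      intros; ring
    simp only [hpt, Finset.sum_add_distrib, Finset.sum_sub_distrib, ← Finset.mul_sum]
  rw [hexp, hW1, hA, hB, hC, hD, hE] at hpos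
  linarith


-- expansion of a vector in the eigenbasis, function-level
lemma eig_expand {n : ℕ} {B : Matrix (Fin n) (Fin n) ℝ} (hB : B.IsHermitian)
    (x : Fin n → ℝ) (k : Fin n) :
    x k = ∑ i, (∑ j, (hB.eigenvectorBasis i : EuclideanSpace ℝ (Fin n)) j * x j)
      * (hB.eigenvectorBasis i : EuclideanSpace ℝ (Fin n)) k := by
  classical
  set b := hB.eigenvectorBasis with hb
  set x' : EuclideanSpace ℝ (Fin n) := (WithLp.equiv 2 (Fin n → ℝ)).symm x with hx'
  have hrepr : ∑ i, (inner ℝ (b i) x' : ℝ) • b i = x' := b.sum_repr' x'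
  have hinner : ∀ i, (inner ℝ (b i) x' : ℝ) = ∑ j, (b i : EuclideanSpace ℝ (Fin n)) j * x j := by
    intro i
    rw [PiLp.inner_apply]
    exact Finset.sum_congr rfl fun j _ => by
      simp [hx', RCLike.inner_apply, WithLp.equiv_symm_apply, mul_comm]
  have := congrFun (congrArg (fun y : EuclideanSpace ℝ (Fin n) => (y : Fin n → ℝ)) hrepr) k
  simp only [hx', WithLp.equiv_symm_apply, WithLp.ofLp_toLp] at this
  rw [← this]
  rw [WithLp.ofLp_sum, Finset.sum_apply]
  refine (Finset.sum_congr rfl fun i _ => ?_).symm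
  rw [show WithLp.toLp 2 x = x' from rfl, hinner i]
  simp [PiLp.smul_apply, smul_eq_mul]


lemma parseval {n : ℕ} {B : Matrix (Fin n) (Fin n) ℝ} (hB : B.IsHermitian)
    (x : Fin n → ℝ) :
    ∑ k, x k ^ 2
      = ∑ i, (∑ j, (hB.eigenvectorBasis i : EuclideanSpace ℝ (Fin n)) j * x j) ^ 2 := by
  set b := hB.eigenvectorBasis with hb
  set c : Fin n → ℝ := fun i => ∑ j, (b i : EuclideanSpace ℝ (Fin n)) j * x j with hc
  show ∑ k, x k ^ 2 = ∑ i, c i ^ 2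
  calc ∑ k, x k ^ 2 = ∑ k, x k * ∑ i, c i * (b i : EuclideanSpace ℝ (Fin n)) k := by
        refine Finset.sum_congr rfl fun k _ => ?_
        rw [sq]; congr 1; exact eig_expand hB x k
    _ = ∑ i, ∑ k, x k * (c i * (b i : EuclideanSpace ℝ (Fin n)) k) := by
        rw [Finset.sum_comm]
        exact Finset.sum_congr rfl fun k _ => Finset.mul_sum _ _ _
    _ = ∑ i, c i ^ 2 := by
        refine Finset.sum_congr rfl fun i _ => ?_
        calc ∑ k, x k * (c i * (b i : EuclideanSpace ℝ (Fin n)) k)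
            = c i * ∑ k, (b i : EuclideanSpace ℝ (Fin n)) k * x k := by
              rw [Finset.mul_sum]; exact Finset.sum_congr rfl fun k _ => by ring
          _ = c i * c i := rfl
          _ = c i ^ 2 := (sq (c i)).symm

lemma quad_eig {n : ℕ} {B : Matrix (Fin n) (Fin n) ℝ} (hB : B.IsHermitian)
    (x : Fin n → ℝ) :
    ∑ k, ∑ j, x k * B k j * x j
      = ∑ i, hB.eigenvalues i
          * (∑ j, (hB.eigenvectorBasis i : EuclideanSpace ℝ (Fin n)) j * x j) ^ 2 := by
  set b := hB.eigenvectorBasis with hb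
  set c : Fin n → ℝ := fun i => ∑ j, (b i : EuclideanSpace ℝ (Fin n)) j * x j with hc
  show ∑ k, ∑ j, x k * B k j * x j = ∑ i, hB.eigenvalues i * c i ^ 2
  have hBx : ∀ k, (∑ j, B k j * x j)
      = ∑ i, c i * (hB.eigenvalues i * (b i : EuclideanSpace ℝ (Fin n)) k) := by
    intro k
    calc ∑ j, B k j * x j
        = ∑ j, B k j * ∑ i, c i * (b i : EuclideanSpace ℝ (Fin n)) j := by
          refine Finset.sum_congr rfl fun j _ => ?_
          congr 1; exact eig_expand hB x j
      _ = ∑ i, ∑ j, B k j * (c i * (b i : EuclideanSpace ℝ (Fin n)) j) := by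
          rw [Finset.sum_comm]
          exact Finset.sum_congr rfl fun j _ => Finset.mul_sum _ _ _
      _ = ∑ i, c i * (hB.eigenvalues i * (b i : EuclideanSpace ℝ (Fin n)) k) := by
          refine Finset.sum_congr rfl fun i _ => ?_
          have hmv : (B *ᵥ ⇑(b i)) = hB.eigenvalues i • ⇑(b i) := hB.mulVec_eigenvectorBasis i
          have hmvk : ∑ j, B k j * (b i : EuclideanSpace ℝ (Fin n)) j
              = hB.eigenvalues i * (b i : EuclideanSpace ℝ (Fin n)) k := by
            have := congrFun hmv k
            simpa [Matrix.mulVec, dotProduct] using this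
          calc ∑ j, B k j * (c i * (b i : EuclideanSpace ℝ (Fin n)) j)
              = c i * ∑ j, B k j * (b i : EuclideanSpace ℝ (Fin n)) j := by
                rw [Finset.mul_sum]; exact Finset.sum_congr rfl fun j _ => by ring
            _ = c i * (hB.eigenvalues i * (b i : EuclideanSpace ℝ (Fin n)) k) := by rw [hmvk]
  calc ∑ k, ∑ j, x k * B k j * x j
      = ∑ k, x k * ∑ i, c i * (hB.eigenvalues i * (b i : EuclideanSpace ℝ (Fin n)) k) := by
        refine Finset.sum_congr rfl fun k _ => ?_
        rw [← hBx k, Finset.mul_sum]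
        exact Finset.sum_congr rfl fun j _ => by ring
    _ = ∑ i, ∑ k, x k * (c i * (hB.eigenvalues i * (b i : EuclideanSpace ℝ (Fin n)) k)) := by
        rw [Finset.sum_comm]
        exact Finset.sum_congr rfl fun k _ => Finset.mul_sum _ _ _
    _ = ∑ i, hB.eigenvalues i * c i ^ 2 := by
        refine Finset.sum_congr rfl fun i _ => ?_
        calc ∑ k, x k * (c i * (hB.eigenvalues i * (b i : EuclideanSpace ℝ (Fin n)) k))
            = hB.eigenvalues i * c i * ∑ k, (b i : EuclideanSpace ℝ (Fin n)) k * x k := by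
              rw [Finset.mul_sum]; exact Finset.sum_congr rfl fun k _ => by ring
          _ = hB.eigenvalues i * c i * c i := rfl
          _ = hB.eigenvalues i * c i ^ 2 := by ring

lemma spec_lower {n : ℕ} {B : Matrix (Fin n) (Fin n) ℝ} (hB : B.IsHermitian)
    (i₀ : Fin n) (m : ℝ) (hm : ∀ i, i ≠ i₀ → m ≤ hB.eigenvalues i) (x : Fin n → ℝ) :
    m * (∑ k, x k ^ 2) + (hB.eigenvalues i₀ - m)
        * (∑ j, (hB.eigenvectorBasis i₀ : EuclideanSpace ℝ (Fin n)) j * x j) ^ 2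
      ≤ ∑ k, ∑ j, x k * B k j * x j := by
  classical
  rw [quad_eig hB x, parseval hB x]
  set c : Fin n → ℝ := fun i => ∑ j, (hB.eigenvectorBasis i : EuclideanSpace ℝ (Fin n)) j * x j
  have hsplit : ∑ i, (hB.eigenvalues i - m) * c i ^ 2
      = (hB.eigenvalues i₀ - m) * c i₀ ^ 2
        + ∑ i ∈ Finset.univ.erase i₀, (hB.eigenvalues i - m) * c i ^ 2 :=
    (Finset.add_sum_erase _ _ (Finset.mem_univ i₀)).symm
  have hrest : 0 ≤ ∑ i ∈ Finset.univ.erase i₀, (hB.eigenvalues i - m) * c i ^ 2 :=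
    Finset.sum_nonneg fun i hi =>
      mul_nonneg (sub_nonneg.mpr (hm i (Finset.ne_of_mem_erase hi))) (sq_nonneg _)
  have hsub : ∑ i, (hB.eigenvalues i - m) * c i ^ 2
      = (∑ i, hB.eigenvalues i * c i ^ 2) - m * ∑ i, c i ^ 2 := by
    rw [Finset.mul_sum, ← Finset.sum_sub_distrib]
    exact Finset.sum_congr rfl fun i _ => by ring
  linarith [hsplit, hrest, hsub]

lemma spec_upper {n : ℕ} {B : Matrix (Fin n) (Fin n) ℝ} (hB : B.IsHermitian)
    (i₀ : Fin n) (m : ℝ) (hm : ∀ i, i ≠ i₀ → hB.eigenvalues i ≤ m) (x : Fin n → ℝ) :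
    ∑ k, ∑ j, x k * B k j * x j
      ≤ m * (∑ k, x k ^ 2) + (hB.eigenvalues i₀ - m)
          * (∑ j, (hB.eigenvectorBasis i₀ : EuclideanSpace ℝ (Fin n)) j * x j) ^ 2 := by
  classical
  rw [quad_eig hB x, parseval hB x]
  set c : Fin n → ℝ := fun i => ∑ j, (hB.eigenvectorBasis i : EuclideanSpace ℝ (Fin n)) j * x j
  have hsplit : ∑ i, (hB.eigenvalues i - m) * c i ^ 2
      = (hB.eigenvalues i₀ - m) * c i₀ ^ 2
        + ∑ i ∈ Finset.univ.erase i₀, (hB.eigenvalues i - m) * c i ^ 2 :=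
    (Finset.add_sum_erase _ _ (Finset.mem_univ i₀)).symm
  have hrest : ∑ i ∈ Finset.univ.erase i₀, (hB.eigenvalues i - m) * c i ^ 2 ≤ 0 :=
    Finset.sum_nonpos fun i hi =>
      mul_nonpos_of_nonpos_of_nonneg (sub_nonpos.mpr (hm i (Finset.ne_of_mem_erase hi)))
        (sq_nonneg _)
  have hsub : ∑ i, (hB.eigenvalues i - m) * c i ^ 2
      = (∑ i, hB.eigenvalues i * c i ^ 2) - m * ∑ i, c i ^ 2 := by
    rw [Finset.mul_sum, ← Finset.sum_sub_distrib]
    exact Finset.sum_congr rfl fun i _ => by ring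
  linarith [hsplit, hrest, hsub]


lemma Oset_nonempty {n : ℕ} (hn : 2 ≤ n) (A B : Matrix (Fin n) (Fin n) ℝ) :
    (Oset A B).Nonempty := by
  classical
  set i0 : Fin n := ⟨0, by omega⟩
  set i1 : Fin n := ⟨1, by omega⟩
  have h01 : i0 ≠ i1 := by simp [i0, i1, Fin.ext_iff]
  set c : ℝ := (Real.sqrt 2)⁻¹ with hcdef
  have hc2 : c ^ 2 = 1 / 2 := by
    rw [hcdef, inv_pow, Real.sq_sqrt (by norm_num : (0:ℝ) ≤ 2)]
    norm_num
  set W : Matrix (Fin n) (Fin n) ℝ := Matrix.of fun i j =>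
    if i = i0 ∧ j = i1 then c else if i = i1 ∧ j = i0 then -c else 0 with hWdef
  have hskew : Wᵀ = -W := by
    ext i j
    simp only [Matrix.transpose_apply, Matrix.neg_apply, hWdef, Matrix.of_apply]
    by_cases h1 : i = i0 <;> by_cases h2 : j = i1 <;> by_cases h3 : i = i1 <;>
      by_cases h4 : j = i0 <;> simp_all <;> ring
  have hfrob : frobNorm W = 1 := by
    rw [frobNorm_eq_one_iff]
    have hpt : ∀ i j : Fin n, W i j ^ 2
        = (if i = i0 ∧ j = i1 then c ^ 2 else 0) + (if i = i1 ∧ j = i0 then c ^ 2 else 0) := by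
      intro i j
      simp only [hWdef, Matrix.of_apply]
      by_cases h1 : i = i0 ∧ j = i1
      · have h2 : ¬(i = i1 ∧ j = i0) := fun h2 => h01 (h1.1.symm.trans h2.1)
        simp [h1, h2]
        exact fun h _ => absurd h h01
      · by_cases h2 : i = i1 ∧ j = i0
        · simp [h1, h2]
          exact fun h _ => absurd h.symm h01
        · simp [h1, h2]
    have e1 : ∑ i : Fin n, ∑ j : Fin n, (if i = i0 ∧ j = i1 then c ^ 2 else 0) = c ^ 2 := by
      simp [ite_and, Finset.sum_ite_eq']
    have e2 : ∑ i : Fin n, ∑ j : Fin n, (if i = i1 ∧ j = i0 then c ^ 2 else 0) = c ^ 2 := by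
      simp [ite_and, Finset.sum_ite_eq']
    simp only [hpt, Finset.sum_add_distrib, e1, e2]
    rw [hc2]; norm_num
  exact ⟨(A * W * B * Wᵀ).trace, W, hskew, hfrob, rfl⟩


lemma core {n : ℕ} (hn : 2 ≤ n) (A B : Matrix (Fin n) (Fin n) ℝ)
    (v : Fin n → ℝ) (hv : ∑ i, v i ^ 2 = 1)
    (l1 l2 : ℝ) (hl : l1 < l2)
    (hvBv : ∑ i, ∑ j, v i * B i j * v j = l1)
    (hq : ∀ x : Fin n → ℝ,
      l2 * (∑ i, x i ^ 2) + (l1 - l2) * (∑ i, v i * x i) ^ 2 ≤ ∑ i, ∑ j, x i * B i j * x j) :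
    ∃ μ₀ : ℝ, 0 < μ₀ ∧ ∀ μ : ℝ, μ₀ ≤ μ →
      sInf (Eset (A + μ • (1 : Matrix (Fin n) (Fin n) ℝ)) B)
        ≤ sInf (Oset (A + μ • (1 : Matrix (Fin n) (Fin n) ℝ)) B) := by
  classical
  set CA : ℝ := ∑ i, ∑ j, |A i j| with hCA
  set CB : ℝ := ∑ i, ∑ j, |B i j| with hCBdef
  set q : ℝ := ∑ i, ∑ j, v i * A i j * v j with hqdef
  -- the symmetric test matrix U = v vᵀ
  set U : Matrix (Fin n) (Fin n) ℝ := Matrix.of fun i j => v i * v j with hUdef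
  have hUsym : Uᵀ = U := by
    ext i j; simp only [Matrix.transpose_apply, hUdef, Matrix.of_apply]; ring
  have hUfrob : frobNorm U = 1 := by
    rw [frobNorm_eq_one_iff]
    have : ∀ i : Fin n, ∑ j, U i j ^ 2 = v i ^ 2 := by
      intro i
      have : ∀ j : Fin n, U i j ^ 2 = v i ^ 2 * v j ^ 2 := fun j => by
        simp only [hUdef, Matrix.of_apply]; ring
      simp only [this, ← Finset.mul_sum, hv, mul_one]
    simp only [this, hv]
  -- U * B * U = l1 • U
  have hUBU : U * B * U = l1 • U := by
    ext i j
    simp only [Matrix.mul_apply, Matrix.smul_apply, hUdef, Matrix.of_apply, smul_eq_mul]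
    calc ∑ l, (∑ k, v i * v k * B k l) * (v l * v j)
        = v i * v j * ∑ l, ∑ k, v k * B k l * v l := by
          rw [Finset.mul_sum]
          refine Finset.sum_congr rfl fun l _ => ?_
          rw [Finset.sum_mul, Finset.mul_sum]
          exact Finset.sum_congr rfl fun k _ => by ring
      _ = v i * v j * ∑ k, ∑ l, v k * B k l * v l := by rw [Finset.sum_comm]
      _ = l1 * (v i * v j) := by rw [hvBv]; ring
  -- E-value of U
  have hEval : ∀ μ : ℝ, ((A + μ • (1 : Matrix (Fin n) (Fin n) ℝ)) * U * B * U).trace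
      = l1 * (q + μ) := by
    intro μ
    set A' := A + μ • (1 : Matrix (Fin n) (Fin n) ℝ) with hA'
    have h1 : A' * U * B * U = A' * (U * B * U) := by
      rw [Matrix.mul_assoc, Matrix.mul_assoc, Matrix.mul_assoc]
    have htrU : U.trace = 1 := by
      rw [Matrix.trace]
      have : ∀ i : Fin n, U i i = v i ^ 2 := fun i => by
        simp only [hUdef, Matrix.of_apply]; ring
      simp only [Matrix.diag]
      rw [Finset.sum_congr rfl fun i _ => this i, hv]
    have htrAU : (A * U).trace = q := by
      rw [Matrix.trace, hqdef]
      refine Finset.sum_congr rfl fun i _ => ?_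
      simp only [Matrix.diag, Matrix.mul_apply, hUdef, Matrix.of_apply]
      exact Finset.sum_congr rfl fun j _ => by ring
    rw [h1, hUBU, Matrix.mul_smul, Matrix.trace_smul, hA', Matrix.add_mul,
      Matrix.smul_mul, Matrix.one_mul, Matrix.trace_add, Matrix.trace_smul, htrAU, htrU]
    simp [smul_eq_mul]
  -- lower bound for O elements
  have hOlb : ∀ μ : ℝ, 0 ≤ μ → ∀ o ∈ Oset (A + μ • (1 : Matrix (Fin n) (Fin n) ℝ)) B,
      -(CA * CB) + μ * ((l1 + l2) / 2) ≤ o := by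
    intro μ hμ0 o ho
    obtain ⟨W, hWskew, hWfrob, rfl⟩ := ho
    have hW1 : ∑ i, ∑ j, W i j ^ 2 = 1 := (frobNorm_eq_one_iff W).mp hWfrob
    have hWabs : ∀ i j, |W i j| ≤ 1 := entry_abs_le_one hW1
    have hWTabs : ∀ i j, |Wᵀ i j| ≤ 1 := fun i j => hWabs j i
    have hsplit : ((A + μ • (1 : Matrix (Fin n) (Fin n) ℝ)) * W * B * Wᵀ).trace
        = (A * W * B * Wᵀ).trace + μ * (W * B * Wᵀ).trace := by
      rw [Matrix.add_mul, Matrix.smul_mul, Matrix.one_mul, Matrix.add_mul, Matrix.add_mul,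
        Matrix.trace_add, Matrix.smul_mul, Matrix.smul_mul, Matrix.trace_smul]
      simp [smul_eq_mul]
    have h1 : -(CA * CB) ≤ (A * W * B * Wᵀ).trace := by
      have := trace_bound A B W Wᵀ hWabs hWTabs
      rw [← hCA, ← hCBdef] at this
      cases' abs_le.mp this with h _
      linarith
    have h2 : (l1 + l2) / 2 ≤ (W * B * Wᵀ).trace := by
      have htr : (W * B * Wᵀ).trace = ∑ l, ∑ i, ∑ j, W l i * B i j * W l j := by
        rw [Matrix.trace]
        refine Finset.sum_congr rfl fun l _ => ?_
        simp only [Matrix.diag, Matrix.mul_apply, Matrix.transpose_apply]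
        calc ∑ j, (∑ i, W l i * B i j) * W l j
            = ∑ j, ∑ i, W l i * B i j * W l j := by
              refine Finset.sum_congr rfl fun j _ => ?_
              rw [Finset.sum_mul]
          _ = ∑ i, ∑ j, W l i * B i j * W l j := Finset.sum_comm
      have hrow : ∀ l : Fin n,
          l2 * (∑ i, W l i ^ 2) + (l1 - l2) * (∑ i, v i * W l i) ^ 2
            ≤ ∑ i, ∑ j, W l i * B i j * W l j := fun l => hq (fun i => W l i)
      have hs : ∑ l, (∑ i, v i * W l i) ^ 2 ≤ 1 / 2 := by
        have hsb := skew_row_bound W hWskew hW1 v hv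
        calc ∑ l, (∑ i, v i * W l i) ^ 2 = ∑ l, (∑ i, W l i * v i) ^ 2 := by
              refine Finset.sum_congr rfl fun l _ => ?_
              congr 1
              exact Finset.sum_congr rfl fun i _ => mul_comm _ _
          _ ≤ 1 / 2 := hsb
      have hsnn : (0:ℝ) ≤ ∑ l, (∑ i, v i * W l i) ^ 2 :=
        Finset.sum_nonneg fun l _ => sq_nonneg _
      calc (l1 + l2) / 2 = l2 * 1 + (l1 - l2) * (1 / 2) := by ring
        _ ≤ l2 * 1 + (l1 - l2) * ∑ l, (∑ i, v i * W l i) ^ 2 := by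
            have hmm := mul_nonneg (by linarith : (0:ℝ) ≤ l2 - l1)
              (by linarith : (0:ℝ) ≤ 1 / 2 - ∑ l, (∑ i, v i * W l i) ^ 2)
            nlinarith [hmm]
        _ = ∑ l, (l2 * (∑ i, W l i ^ 2) + (l1 - l2) * (∑ i, v i * W l i) ^ 2) := by
            rw [Finset.sum_add_distrib, ← Finset.mul_sum, ← Finset.mul_sum, hW1]
        _ ≤ ∑ l, ∑ i, ∑ j, W l i * B i j * W l j := Finset.sum_le_sum fun l _ => hrow l
        _ = (W * B * Wᵀ).trace := htr.symm
    have hmul : μ * ((l1 + l2) / 2) ≤ μ * (W * B * Wᵀ).trace :=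
      mul_le_mul_of_nonneg_left h2 hμ0
    rw [hsplit]
    linarith
  -- E membership and boundedness
  have hEmem : ∀ μ : ℝ, l1 * (q + μ) ∈ Eset (A + μ • (1 : Matrix (Fin n) (Fin n) ℝ)) B :=
    fun μ => ⟨U, hUsym, hUfrob, (hEval μ).symm⟩
  have hEbdd : ∀ μ : ℝ, BddBelow (Eset (A + μ • (1 : Matrix (Fin n) (Fin n) ℝ)) B) := by
    intro μ
    refine ⟨-((∑ i, ∑ j, |(A + μ • (1 : Matrix (Fin n) (Fin n) ℝ)) i j|) * CB), ?_⟩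
    rintro t ⟨U', hU's, hU'f, rfl⟩
    have h1 := (frobNorm_eq_one_iff U').mp hU'f
    have habs := entry_abs_le_one h1
    have hbd := trace_bound (A + μ • (1 : Matrix (Fin n) (Fin n) ℝ)) B U' U' habs habs
    rw [← hCBdef] at hbd
    cases' abs_le.mp hbd with h _
    linarith
  set K : ℝ := CA * CB + l1 * q with hKdef
  refine ⟨max 1 (2 * K / (l2 - l1)), lt_of_lt_of_le one_pos (le_max_left _ _), ?_⟩
  intro μ hμ
  have hμ1 : (1:ℝ) ≤ μ := le_trans (le_max_left _ _) hμ
  have hμ0 : (0:ℝ) ≤ μ := by linarith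
  have hμK : 2 * K / (l2 - l1) ≤ μ := le_trans (le_max_right _ _) hμ
  have hgap : (0:ℝ) < l2 - l1 := by linarith
  have hkey : l1 * (q + μ) ≤ -(CA * CB) + μ * ((l1 + l2) / 2) := by
    have h2K := (div_le_iff₀ hgap).mp hμK
    linarith [hKdef]
  calc sInf (Eset (A + μ • (1 : Matrix (Fin n) (Fin n) ℝ)) B)
      ≤ l1 * (q + μ) := csInf_le (hEbdd μ) (hEmem μ)
    _ ≤ -(CA * CB) + μ * ((l1 + l2) / 2) := hkey
    _ ≤ sInf (Oset (A + μ • (1 : Matrix (Fin n) (Fin n) ℝ)) B) :=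
        le_csInf (Oset_nonempty hn _ _) (hOlb μ hμ0)


-- basic facts about negating B
lemma Eset_neg {n : ℕ} (A B : Matrix (Fin n) (Fin n) ℝ) : Eset A (-B) = -(Eset A B) := by
  ext t
  constructor
  · rintro ⟨U, h1, h2, rfl⟩
    refine ⟨U, h1, h2, ?_⟩
    have : A * U * -B * U = -(A * U * B * U) := by
      rw [Matrix.mul_neg, Matrix.neg_mul]
    rw [this, Matrix.trace_neg, neg_neg]
  · rintro ⟨U, h1, h2, h3⟩
    refine ⟨U, h1, h2, ?_⟩
    have : A * U * -B * U = -(A * U * B * U) := by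
      rw [Matrix.mul_neg, Matrix.neg_mul]
    rw [this, Matrix.trace_neg, ← h3]
    simp

lemma Oset_neg {n : ℕ} (A B : Matrix (Fin n) (Fin n) ℝ) : Oset A (-B) = -(Oset A B) := by
  ext t
  constructor
  · rintro ⟨W, h1, h2, rfl⟩
    refine ⟨W, h1, h2, ?_⟩
    have : A * W * -B * Wᵀ = -(A * W * B * Wᵀ) := by
      rw [Matrix.mul_neg, Matrix.neg_mul]
    rw [this, Matrix.trace_neg, neg_neg]
  · rintro ⟨W, h1, h2, h3⟩
    refine ⟨W, h1, h2, ?_⟩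
    have : A * W * -B * Wᵀ = -(A * W * B * Wᵀ) := by
      rw [Matrix.mul_neg, Matrix.neg_mul]
    rw [this, Matrix.trace_neg, ← h3]
    simp

lemma sInf_neg_set (S : Set ℝ) : sInf (-S) = -sSup S := by
  rw [Real.sInf_def, neg_neg]

-- eigenvector basis facts
lemma eigvec_norm {n : ℕ} {B : Matrix (Fin n) (Fin n) ℝ} (hB : B.IsHermitian) (i : Fin n) :
    ∑ j, (hB.eigenvectorBasis i : EuclideanSpace ℝ (Fin n)) j ^ 2 = 1 := by
  have h1 : ‖hB.eigenvectorBasis i‖ = 1 := hB.eigenvectorBasis.orthonormal.1 i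
  have h2 : (inner ℝ (hB.eigenvectorBasis i) (hB.eigenvectorBasis i) : ℝ) = 1 := by
    rw [real_inner_self_eq_norm_sq, h1]; norm_num
  rw [PiLp.inner_apply] at h2
  rw [← h2]
  exact Finset.sum_congr rfl fun j _ => by
    simp [RCLike.inner_apply, sq]

lemma eigvec_quad {n : ℕ} {B : Matrix (Fin n) (Fin n) ℝ} (hB : B.IsHermitian) (i : Fin n) :
    ∑ k, ∑ j, (hB.eigenvectorBasis i : EuclideanSpace ℝ (Fin n)) k * B k j
        * (hB.eigenvectorBasis i : EuclideanSpace ℝ (Fin n)) j = hB.eigenvalues i := by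
  set v : Fin n → ℝ := fun k => (hB.eigenvectorBasis i : EuclideanSpace ℝ (Fin n)) k with hvdef
  have hmv : B *ᵥ v = hB.eigenvalues i • v := hB.mulVec_eigenvectorBasis i
  have hstep : ∀ k, ∑ j, v k * B k j * v j = v k * (hB.eigenvalues i * v k) := by
    intro k
    have h1 : ∑ j, B k j * v j = hB.eigenvalues i * v k := by
      have := congrFun hmv k
      simpa [Matrix.mulVec, dotProduct] using this
    rw [← h1, Finset.mul_sum]
    exact Finset.sum_congr rfl fun j _ => by ring
  calc ∑ k, ∑ j, v k * B k j * v j = ∑ k, v k * (hB.eigenvalues i * v k) := by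
        exact Finset.sum_congr rfl fun k _ => hstep k
    _ = hB.eigenvalues i * ∑ k, v k ^ 2 := by
        rw [Finset.mul_sum]; exact Finset.sum_congr rfl fun k _ => by ring
    _ = hB.eigenvalues i := by rw [eigvec_norm hB i, mul_one]


lemma sum_negB {n : ℕ} (B : Matrix (Fin n) (Fin n) ℝ) (x y : Fin n → ℝ) :
    ∑ i, ∑ j, x i * (-B) i j * y j = -∑ i, ∑ j, x i * B i j * y j := by
  rw [← Finset.sum_neg_distrib]
  refine Finset.sum_congr rfl fun i _ => ?_
  rw [← Finset.sum_neg_distrib]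
  refine Finset.sum_congr rfl fun j _ => ?_
  simp [Matrix.neg_apply]

theorem stmt_11 (n : ℕ) (hn : 2 ≤ n) (A B : Matrix (Fin n) (Fin n) ℝ)
    (hA : Aᵀ = A) (hB : B.IsHermitian)
    (hpos : ∃ i, 0 < hB.eigenvalues i) (hneg : ∃ i, hB.eigenvalues i < 0)
    (hmax : (Finset.univ.filter
        (fun i => hB.eigenvalues i = ⨆ j, hB.eigenvalues j)).card = 1)
    (hmin : (Finset.univ.filter
        (fun i => hB.eigenvalues i = ⨅ j, hB.eigenvalues j)).card = 1) :
    ∃ μ₀ : ℝ, 0 < μ₀ ∧ ∀ μ : ℝ, μ₀ ≤ μ →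
      sInf (Eset (A + μ • (1 : Matrix (Fin n) (Fin n) ℝ)) B)
          ≤ sInf (Oset (A + μ • (1 : Matrix (Fin n) (Fin n) ℝ)) B) ∧
        sSup (Oset (A + μ • (1 : Matrix (Fin n) (Fin n) ℝ)) B)
          ≤ sSup (Eset (A + μ • (1 : Matrix (Fin n) (Fin n) ℝ)) B) := by
  classical
  have hne : Nonempty (Fin n) := ⟨⟨0, by omega⟩⟩
  set ev := hB.eigenvalues with hev
  -- ### Inf side
  obtain ⟨i₁, hi₁⟩ := exists_eq_ciInf_of_finite (f := ev)
  have hi₁mem : i₁ ∈ Finset.univ.filter (fun i => ev i = ⨅ j, ev j) := by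
    simp [Finset.mem_filter, hi₁]
  have hfil₁ : Finset.univ.filter (fun i => ev i = ⨅ j, ev j) = {i₁} := by
    obtain ⟨a, ha⟩ := Finset.card_eq_one.mp hmin
    rw [ha] at hi₁mem ⊢
    rw [Finset.mem_singleton.mp hi₁mem]
  have hne₁ : ∀ i, i ≠ i₁ → ev i ≠ ⨅ j, ev j := by
    intro i hi hc
    apply hi
    have : i ∈ Finset.univ.filter (fun i => ev i = ⨅ j, ev j) := by
      simp [Finset.mem_filter, hc]
    rw [hfil₁] at this
    exact Finset.mem_singleton.mp this
  have herase₁ : (Finset.univ.erase i₁).Nonempty := by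
    rw [← Finset.card_pos, Finset.card_erase_of_mem (Finset.mem_univ i₁)]
    simp [Fintype.card_fin]
    omega
  set l2 : ℝ := (Finset.univ.erase i₁).inf' herase₁ ev with hl2
  have hl2le : ∀ i, i ≠ i₁ → l2 ≤ ev i := by
    intro i hi
    exact Finset.inf'_le ev (Finset.mem_erase.mpr ⟨hi, Finset.mem_univ i⟩)
  have hgap₁ : ev i₁ < l2 := by
    obtain ⟨i₂, hi₂mem, hi₂⟩ := Finset.exists_mem_eq_inf' herase₁ ev
    rw [hl2, hi₂]
    rcases lt_or_eq_of_le (hi₁ ▸ ciInf_le (Finite.bddBelow_range ev) i₂) with h | h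
    · exact h
    · exact absurd h.symm (hi₁ ▸ hne₁ i₂ (Finset.ne_of_mem_erase hi₂mem))
  obtain ⟨μ₁, hμ₁pos, hμ₁⟩ := core hn A B
    (fun k => (hB.eigenvectorBasis i₁ : EuclideanSpace ℝ (Fin n)) k)
    (eigvec_norm hB i₁) (ev i₁) l2 hgap₁ (eigvec_quad hB i₁)
    (fun x => spec_lower hB i₁ l2 hl2le x)
  -- ### Sup side
  obtain ⟨i₂, hi₂⟩ := exists_eq_ciSup_of_finite (f := ev)
  have hi₂mem : i₂ ∈ Finset.univ.filter (fun i => ev i = ⨆ j, ev j) := by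
    simp [Finset.mem_filter, hi₂]
  have hfil₂ : Finset.univ.filter (fun i => ev i = ⨆ j, ev j) = {i₂} := by
    obtain ⟨a, ha⟩ := Finset.card_eq_one.mp hmax
    rw [ha] at hi₂mem ⊢
    rw [Finset.mem_singleton.mp hi₂mem]
  have hne₂ : ∀ i, i ≠ i₂ → ev i ≠ ⨆ j, ev j := by
    intro i hi hc
    apply hi
    have : i ∈ Finset.univ.filter (fun i => ev i = ⨆ j, ev j) := by
      simp [Finset.mem_filter, hc]
    rw [hfil₂] at this
    exact Finset.mem_singleton.mp this
  have herase₂ : (Finset.univ.erase i₂).Nonempty := by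
    rw [← Finset.card_pos, Finset.card_erase_of_mem (Finset.mem_univ i₂)]
    simp [Fintype.card_fin]
    omega
  set m2 : ℝ := (Finset.univ.erase i₂).sup' herase₂ ev with hm2
  have hm2ge : ∀ i, i ≠ i₂ → ev i ≤ m2 := by
    intro i hi
    exact Finset.le_sup' ev (Finset.mem_erase.mpr ⟨hi, Finset.mem_univ i⟩)
  have hgap₂ : m2 < ev i₂ := by
    obtain ⟨i₃, hi₃mem, hi₃⟩ := Finset.exists_mem_eq_sup' herase₂ ev
    rw [hm2, hi₃]
    rcases lt_or_eq_of_le (hi₂ ▸ le_ciSup (Finite.bddAbove_range ev) i₃) with h | h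
    · exact h
    · exact absurd h (hi₂ ▸ hne₂ i₃ (Finset.ne_of_mem_erase hi₃mem))
  have hvBv₂ : ∑ i, ∑ j, (hB.eigenvectorBasis i₂ : EuclideanSpace ℝ (Fin n)) i * (-B) i j
      * (hB.eigenvectorBasis i₂ : EuclideanSpace ℝ (Fin n)) j = -ev i₂ := by
    rw [sum_negB, eigvec_quad hB i₂]
  have hq₂ : ∀ x : Fin n → ℝ,
      (-m2) * (∑ i, x i ^ 2) + ((-ev i₂) - (-m2))
          * (∑ i, (hB.eigenvectorBasis i₂ : EuclideanSpace ℝ (Fin n)) i * x i) ^ 2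
        ≤ ∑ i, ∑ j, x i * (-B) i j * x j := by
    intro x
    have h1 := spec_upper hB i₂ m2 hm2ge x
    rw [sum_negB]
    linarith
  obtain ⟨μ₂, hμ₂pos, hμ₂⟩ := core hn A (-B)
    (fun k => (hB.eigenvectorBasis i₂ : EuclideanSpace ℝ (Fin n)) k)
    (eigvec_norm hB i₂) (-ev i₂) (-m2) (by linarith) hvBv₂ hq₂
  -- ### combine
  refine ⟨max μ₁ μ₂, lt_of_lt_of_le hμ₁pos (le_max_left _ _), ?_⟩
  intro μ hμ
  constructor
  · exact hμ₁ μ (le_trans (le_max_left _ _) hμ)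
  · have h := hμ₂ μ (le_trans (le_max_right _ _) hμ)
    rw [Eset_neg, Oset_neg, sInf_neg_set, sInf_neg_set] at h
    linarith
end

section
/- Let n ≥ 2 and let B be an n×n real symmetric matrix whose largest eigenvalue λ₁(B) has multiplicity 1 (a one-dimensional eigenspace). Then for every skew-symmetric matrix W ∈ Kⁿ with ‖W‖_F = 1 one has trace(W·B·Wᵀ) < λ₁(B). -/
open Matrix

theorem stmt_12 (n : ℕ) (hn : 2 ≤ n) (B : Matrix (Fin n) (Fin n) ℝ)
    (hB : B.IsHermitian)
    (hmax : (Finset.univ.filter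
        (fun i => hB.eigenvalues i = ⨆ j, hB.eigenvalues j)).card = 1)
    (W : Matrix (Fin n) (Fin n) ℝ) (hW : Wᵀ = -W) (hWn : frobNorm W = 1) :
    (W * B * Wᵀ).trace < ⨆ j, hB.eigenvalues j := by
  classical
  set lam := hB.eigenvalues with hlam
  set s := ⨆ j, hB.eigenvalues j with hs
  obtain ⟨j₀, hj₀⟩ := Finset.card_eq_one.mp hmax
  have hj₀mem : lam j₀ = s := by
    have : j₀ ∈ Finset.univ.filter (fun i => hB.eigenvalues i = s) := by
      rw [hj₀]; exact Finset.mem_singleton_self j₀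
    simpa using this
  have huniq : ∀ j, lam j = s → j = j₀ := by
    intro j hj
    have : j ∈ Finset.univ.filter (fun i => hB.eigenvalues i = s) := by simpa using hj
    rw [hj₀] at this; simpa using this
  have hle : ∀ j, lam j ≤ s := fun j => le_ciSup (Finite.bddAbove_range _) j
  set U : Matrix (Fin n) (Fin n) ℝ := (hB.eigenvectorUnitary : Matrix (Fin n) (Fin n) ℝ) with hU
  have hUU : star U * U = 1 := Unitary.coe_star_mul_self _
  have hUU' : U * star U = 1 := Unitary.coe_mul_star_self _
  have cancel : ∀ X : Matrix (Fin n) (Fin n) ℝ, U * (star U * X) = X := by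
    intro X; rw [← mul_assoc, hUU', one_mul]
  have hdiag : star U * B * U = diagonal lam := by
    have := hB.conjStarAlgAut_star_eigenvectorUnitary
    rw [Unitary.conjStarAlgAut_star_apply] at this
    simpa [RCLike.ofReal_real_eq_id] using this
  have hstarW : star W = Wᵀ := by
    rw [Matrix.star_eq_conjTranspose, conjTranspose_eq_transpose_of_trivial]
  set M : Matrix (Fin n) (Fin n) ℝ := star U * W * U with hM
  have hMstar : star M = star U * Wᵀ * U := by
    rw [hM, Matrix.star_mul, Matrix.star_mul, star_star, hstarW, ← mul_assoc]
  have hMneg : star M = -M := by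
    rw [hMstar, hW, hM]
    simp [Matrix.mul_neg, Matrix.neg_mul]
  have hMskew : ∀ i j, M j i = - M i j := by
    intro i j
    have := congrFun (congrFun hMneg i) j
    simpa [Matrix.star_eq_conjTranspose, Matrix.conjTranspose_apply] using this
  -- trace identity 1
  have key1 : M * diagonal lam * star M = star U * (W * B * Wᵀ) * U := by
    rw [← hdiag, hMstar, hM]
    simp only [Matrix.mul_assoc, cancel]
  have htr1 : (W * B * Wᵀ).trace = (M * diagonal lam * star M).trace := by
    rw [key1, Matrix.trace_mul_cycle (star U) (W * B * Wᵀ) U, ← Matrix.mul_assoc, hUU', one_mul]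
  -- trace identity 2
  have key2 : star M * M = star U * (Wᵀ * W) * U := by
    rw [hMstar, hM]
    simp only [Matrix.mul_assoc, cancel]
  have htr2 : (Wᵀ * W).trace = (star M * M).trace := by
    rw [key2, Matrix.trace_mul_cycle (star U) (Wᵀ * W) U, ← Matrix.mul_assoc, hUU', one_mul]
  -- norm
  have hnorm : (Wᵀ * W).trace = 1 := by
    have := hWn
    rw [frobNorm, Real.sqrt_eq_one] at this
    exact this
  have hsumsq : ∑ i, ∑ j, (M i j) ^ 2 = 1 := by
    have : (star M * M).trace = ∑ i, ∑ j, (M j i) ^ 2 := by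
      simp [Matrix.trace, Matrix.diag, Matrix.mul_apply, Matrix.star_eq_conjTranspose,
        Matrix.conjTranspose_apply, sq]
    rw [← htr2, hnorm] at this
    rw [Finset.sum_comm]
    exact this.symm
  have hsumtr : (M * diagonal lam * star M).trace = ∑ i, ∑ j, (M i j) ^ 2 * lam j := by
    simp [Matrix.trace, Matrix.diag, Matrix.mul_apply, Matrix.star_eq_conjTranspose,
      Matrix.conjTranspose_apply, Matrix.diagonal, Finset.mul_sum, Finset.sum_mul, sq]
    congr 1; funext i; congr 1; funext j
    ring
  rw [htr1, hsumtr]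
  by_contra hcon
  push_neg at hcon
  have hsum0 : ∑ i, ∑ j, (M i j) ^ 2 * (s - lam j) ≤ 0 := by
    have : ∑ i, ∑ j, (M i j) ^ 2 * (s - lam j)
        = (∑ i, ∑ j, (M i j) ^ 2) * s - ∑ i, ∑ j, (M i j) ^ 2 * lam j := by
      rw [Finset.sum_mul]
      rw [← Finset.sum_sub_distrib]
      congr 1; funext i
      rw [Finset.sum_mul, ← Finset.sum_sub_distrib]
      congr 1; funext j
      ring
    rw [this, hsumsq, one_mul]
    linarith
  have hterm : ∀ i ∈ Finset.univ, ∀ j ∈ Finset.univ, (M i j : ℝ) ^ 2 * (s - lam j) = 0 := by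
    have hnn : ∀ i ∈ (Finset.univ : Finset (Fin n)),
        0 ≤ ∑ j, (M i j) ^ 2 * (s - lam j) := by
      intro i _
      apply Finset.sum_nonneg
      intro j _
      exact mul_nonneg (sq_nonneg _) (by linarith [hle j])
    have hz : ∀ i ∈ (Finset.univ : Finset (Fin n)),
        ∑ j, (M i j) ^ 2 * (s - lam j) = 0 := by
      rw [← Finset.sum_eq_zero_iff_of_nonneg hnn]
      exact le_antisymm hsum0 (Finset.sum_nonneg hnn)
    intro i hi j hj
    have := (Finset.sum_eq_zero_iff_of_nonneg (fun j _ => mul_nonneg (sq_nonneg (M i j))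
      (by linarith [hle j]))).mp (hz i hi) j hj
    exact this
  have hcases : ∀ i j, M i j = 0 ∨ lam j = s := by
    intro i j
    rcases mul_eq_zero.mp (hterm i (Finset.mem_univ i) j (Finset.mem_univ j)) with h | h
    · left; exact pow_eq_zero_iff (by norm_num) |>.mp h
    · right; linarith
  have hMzero : ∀ i j, M i j = 0 := by
    intro i j
    rcases hcases i j with h | h
    · exact h
    · have hjj : j = j₀ := huniq j h
      subst hjj
      by_cases hij : i = j
      · subst hij
        have := hMskew i i
        linarith
      · have : M j i = 0 := by
          rcases hcases j i with h' | h'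
          · exact h'
          · exact absurd (huniq i h') hij
        linarith [hMskew i j, this]
  have : (1 : ℝ) = 0 := by
    rw [← hsumsq]
    apply Finset.sum_eq_zero
    intro i _
    apply Finset.sum_eq_zero
    intro j _
    rw [hMzero i j]; ring
  norm_num at this
end

section
/- Let n ≥ 2 and let B be an n×n real symmetric matrix whose smallest eigenvalue λₙ(B) has multiplicity 1 (a one-dimensional eigenspace). Then for every skew-symmetric matrix W ∈ Kⁿ with ‖W‖_F = 1 one has trace(W·B·Wᵀ) > λₙ(B). -/
open Matrix

theorem stmt_13 (n : ℕ) (hn : 2 ≤ n) (B : Matrix (Fin n) (Fin n) ℝ)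
    (hB : B.IsHermitian)
    (hmin : (Finset.univ.filter
        (fun i => hB.eigenvalues i = ⨅ j, hB.eigenvalues j)).card = 1)
    (W : Matrix (Fin n) (Fin n) ℝ) (hW : Wᵀ = -W) (hWn : frobNorm W = 1) :
    (⨅ j, hB.eigenvalues j) < (W * B * Wᵀ).trace := by
  classical
  set lam := hB.eigenvalues with hlam
  set m : ℝ := ⨅ j, lam j with hm
  have : NeZero n := ⟨by omega⟩
  set U : Matrix (Fin n) (Fin n) ℝ := (hB.eigenvectorUnitary : Matrix (Fin n) (Fin n) ℝ)
    with hUdef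
  have hUmem := hB.eigenvectorUnitary.2
  have hUUt : U * Uᵀ = 1 := by
    have := (Matrix.mem_unitaryGroup_iff).mp hUmem
    rwa [star_eq_conjTranspose, conjTranspose_eq_transpose_of_trivial] at this
  have hUtU : Uᵀ * U = 1 := by
    have := (Matrix.mem_unitaryGroup_iff').mp hUmem
    rwa [star_eq_conjTranspose, conjTranspose_eq_transpose_of_trivial] at this
  set M : Matrix (Fin n) (Fin n) ℝ := W * U with hMdef
  -- spectral theorem
  have hspec : B = U * diagonal lam * Uᵀ := by
    have := hB.spectral_theorem
    rwa [Unitary.conjStarAlgAut_apply, star_eq_conjTranspose, conjTranspose_eq_transpose_of_trivial,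
      show (RCLike.ofReal ∘ hB.eigenvalues : Fin n → ℝ) = lam from rfl] at this
  -- trace formula
  have htr : (W * B * Wᵀ).trace = ∑ i, ∑ j, lam j * (M i j)^2 := by
    have h1 : W * B * Wᵀ = M * diagonal lam * Mᵀ := by
      rw [hspec, hMdef, Matrix.transpose_mul]
      noncomm_ring
    rw [h1]
    simp only [Matrix.trace, Matrix.diag, Matrix.mul_apply, Matrix.mul_diagonal,
      Matrix.transpose_apply, Finset.sum_congr]
    apply Finset.sum_congr rfl
    intro i _
    apply Finset.sum_congr rfl
    intro j _
    simp [Matrix.diagonal_apply, mul_ite, mul_zero, ite_mul, zero_mul, Finset.sum_ite_eq,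
      Finset.sum_ite_eq']
    ring
  -- Frobenius norm of M
  have hMnorm : ∑ i, ∑ j, (M i j)^2 = 1 := by
    have h2 : (Wᵀ * W).trace = ∑ i, ∑ j, (W i j)^2 := by
      simp only [Matrix.trace, Matrix.diag, Matrix.mul_apply, Matrix.transpose_apply]
      rw [Finset.sum_comm]
      apply Finset.sum_congr rfl; intro i _
      apply Finset.sum_congr rfl; intro j _
      ring
    have hnn : 0 ≤ (Wᵀ * W).trace := by
      rw [h2]
      positivity
    have htrW : (Wᵀ * W).trace = 1 := by
      have := hWn
      unfold frobNorm at this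
      exact Real.sqrt_eq_one.mp this
    have h3 : (Mᵀ * M).trace = (Wᵀ * W).trace := by
      rw [hMdef, Matrix.transpose_mul, show Uᵀ * Wᵀ * (W * U) = Uᵀ * (Wᵀ * W) * U by
        noncomm_ring, Matrix.trace_mul_cycle, ← Matrix.mul_assoc, hUUt, Matrix.one_mul]
    have h4 : (Mᵀ * M).trace = ∑ i, ∑ j, (M i j)^2 := by
      simp only [Matrix.trace, Matrix.diag, Matrix.mul_apply, Matrix.transpose_apply]
      rw [Finset.sum_comm]
      apply Finset.sum_congr rfl; intro i _
      apply Finset.sum_congr rfl; intro j _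
      ring
    rw [← h4, h3, htrW]
  have hmle : ∀ j, m ≤ lam j := fun j => ciInf_le (Finite.bddBelow_range _) j
  -- unique minimizer
  obtain ⟨j0, hj0⟩ := Finset.card_eq_one.mp hmin
  have hj0mem : j0 ∈ Finset.univ.filter (fun i => lam i = m) := by
    rw [hj0]; exact Finset.mem_singleton_self j0
  have hj0eq : lam j0 = m := (Finset.mem_filter.mp hj0mem).2
  have hlt : ∀ j, j ≠ j0 → m < lam j := by
    intro j hj
    rcases lt_or_eq_of_le (hmle j) with h | h
    · exact h
    · exfalso
      have : j ∈ Finset.univ.filter (fun i => lam i = m) := by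
        simp [h.symm]
      rw [hj0, Finset.mem_singleton] at this
      exact hj this
  -- main inequality, by contradiction
  by_contra hcon
  push_neg at hcon
  rw [htr] at hcon
  have hzero : ∀ i j, j ≠ j0 → M i j = 0 := by
    have hsum : ∑ i, ∑ j, (lam j - m) * (M i j)^2 ≤ 0 := by
      have : ∑ i, ∑ j, (lam j - m) * (M i j)^2
          = (∑ i, ∑ j, lam j * (M i j)^2) - m * (∑ i, ∑ j, (M i j)^2) := by
        rw [Finset.mul_sum]
        rw [← Finset.sum_sub_distrib]
        apply Finset.sum_congr rfl; intro i _
        rw [Finset.mul_sum, ← Finset.sum_sub_distrib]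
        apply Finset.sum_congr rfl; intro j _
        ring
      rw [this, hMnorm, mul_one]
      linarith
    have hterm : ∀ i ∈ Finset.univ, ∀ j ∈ Finset.univ, 0 ≤ (lam j - m) * (M i j)^2 := by
      intro i _ j _
      exact mul_nonneg (by have := hmle j; linarith) (sq_nonneg _)
    have hall : ∀ i ∈ Finset.univ, ∀ j ∈ (Finset.univ : Finset (Fin n)),
        (lam j - m) * (M i j)^2 = 0 := by
      have hnonneg : 0 ≤ ∑ i, ∑ j, (lam j - m) * (M i j)^2 :=
        Finset.sum_nonneg (fun i hi => Finset.sum_nonneg (hterm i hi))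
      have heq : ∑ i, ∑ j, (lam j - m) * (M i j)^2 = 0 := le_antisymm hsum hnonneg
      intro i hi j hj
      have h1 := (Finset.sum_eq_zero_iff_of_nonneg
        (fun i hi => Finset.sum_nonneg (hterm i hi))).mp heq i hi
      exact (Finset.sum_eq_zero_iff_of_nonneg (hterm i hi)).mp h1 j hj
    intro i j hj
    have h := hall i (Finset.mem_univ i) j (Finset.mem_univ j)
    have hpos : 0 < lam j - m := by have := hlt j hj; linarith
    have : (M i j)^2 = 0 := by
      rcases mul_eq_zero.mp h with h' | h'
      · linarith
      · exact h'
    exact pow_eq_zero_iff (by norm_num) |>.mp this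
  -- W = rank one
  have hWfact : ∀ a b, W a b = M a j0 * U b j0 := by
    intro a b
    have hWMU : W = M * Uᵀ := by
      rw [hMdef, Matrix.mul_assoc, hUUt, Matrix.mul_one]
    have : W a b = ∑ j, M a j * U b j := by
      rw [hWMU]
      simp [Matrix.mul_apply]
    rw [this]
    rw [Finset.sum_eq_single j0]
    · intro j _ hj; rw [hzero a j hj]; ring
    · intro h; exact absurd (Finset.mem_univ j0) h
  have hdiag : ∀ a, W a a = 0 := by
    intro a
    have := congrFun (congrFun hW a) a
    simp only [Matrix.transpose_apply, Matrix.neg_apply] at this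
    linarith
  have hWzero : ∀ a b, W a b = 0 := by
    intro a b
    have h1 : W a b * W b a = W a a * W b b := by
      rw [hWfact a b, hWfact b a, hWfact a a, hWfact b b]; ring
    have h2 : W b a = -W a b := by
      have := congrFun (congrFun hW a) b
      simp only [Matrix.transpose_apply, Matrix.neg_apply] at this
      linarith
    rw [h2, hdiag a, hdiag b, zero_mul] at h1
    nlinarith
  -- contradiction with norm
  have : (Wᵀ * W).trace = 0 := by
    simp only [Matrix.trace, Matrix.diag, Matrix.mul_apply, Matrix.transpose_apply]
    apply Finset.sum_eq_zero; intro i _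
    apply Finset.sum_eq_zero; intro j _
    rw [hWzero j i]; ring
  have h1 : (Wᵀ * W).trace = 1 := Real.sqrt_eq_one.mp hWn
  linarith
end

section
/- Let n ≥ 2 and let A, B be n×n real symmetric positive semidefinite matrices. Suppose there exists a nonzero vector v ∈ ℝⁿ with A·v = 0. Then the symmetric matrix U := (v·vᵀ)/(vᵀv) satisfies ‖U‖_F = 1 and trace(A·U·B·U) = 0, while for every skew-symmetric matrix W ∈ Kⁿ one has trace(A·W·B·Wᵀ) ≥ 0. Consequently inf E(A,B) ≤ inf O(A,B). -/
open Matrix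

lemma psd_trace_nonneg {n : ℕ} {M : Matrix (Fin n) (Fin n) ℝ} (hM : M.PosSemidef) :
    0 ≤ M.trace := by
  rw [Matrix.trace]
  refine Finset.sum_nonneg fun i _ => ?_
  have := hM.dotProduct_mulVec_nonneg (Pi.single i 1)
  simpa [Matrix.mulVec_single, dotProduct, Pi.single_apply] using this

lemma mul_vecMulVec_zero {n : ℕ} {A : Matrix (Fin n) (Fin n) ℝ} {v : Fin n → ℝ}
    (hAv : A.mulVec v = 0) : A * vecMulVec v v = 0 := by
  ext i j
  have := congrFun hAv i
  simp only [Matrix.mulVec, dotProduct, Pi.zero_apply] at this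
  simp only [Matrix.mul_apply, Matrix.vecMulVec_apply, Matrix.zero_apply]
  calc ∑ k, A i k * (v k * v j) = (∑ k, A i k * v k) * v j := by
        rw [Finset.sum_mul]; congr 1; ext k; ring
    _ = 0 := by rw [this, zero_mul]

lemma vvT_trace {n : ℕ} (v : Fin n → ℝ) :
    ((vecMulVec v v)ᵀ * (vecMulVec v v)).trace = (v ⬝ᵥ v) * (v ⬝ᵥ v) := by
  simp only [Matrix.trace, Matrix.diag, Matrix.mul_apply, Matrix.transpose_apply,
    Matrix.vecMulVec_apply, dotProduct]
  rw [Finset.sum_mul_sum]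
  rw [Finset.sum_comm]
  congr 1; ext j; congr 1; ext i; ring

theorem stmt_19 (n : ℕ) (hn : 2 ≤ n) (A B : Matrix (Fin n) (Fin n) ℝ)
    (hA : A.PosSemidef) (hB : B.PosSemidef)
    (v : Fin n → ℝ) (hv : v ≠ 0) (hAv : A.mulVec v = 0) :
    frobNorm ((v ⬝ᵥ v)⁻¹ • vecMulVec v v) = 1 ∧
    (A * ((v ⬝ᵥ v)⁻¹ • vecMulVec v v) * B * ((v ⬝ᵥ v)⁻¹ • vecMulVec v v)).trace = 0 ∧
    (∀ W : Matrix (Fin n) (Fin n) ℝ, Wᵀ = -W → 0 ≤ (A * W * B * Wᵀ).trace) ∧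
    sInf (Eset A B) ≤ sInf (Oset A B) := by
  set c : ℝ := v ⬝ᵥ v with hc_def
  have hc_nonneg : 0 ≤ c := Finset.sum_nonneg fun i _ => mul_self_nonneg _
  have hc_pos : 0 < c := by
    rcases lt_or_eq_of_le hc_nonneg with h | h
    · exact h
    · exact absurd (dotProduct_self_eq_zero.mp h.symm) hv
  have hc_ne : c ≠ 0 := ne_of_gt hc_pos
  -- Part 1
  have part1 : frobNorm (c⁻¹ • vecMulVec v v) = 1 := by
    have key : ((c⁻¹ • vecMulVec v v)ᵀ * (c⁻¹ • vecMulVec v v)).trace = 1 := by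
      rw [Matrix.transpose_smul, Matrix.smul_mul, Matrix.mul_smul, Matrix.trace_smul,
        Matrix.trace_smul, vvT_trace, smul_eq_mul, smul_eq_mul]
      field_simp
      rfl
    rw [frobNorm, key, Real.sqrt_one]
  -- Part 2
  have hAM : A * vecMulVec v v = 0 := mul_vecMulVec_zero hAv
  have part2 : (A * (c⁻¹ • vecMulVec v v) * B * (c⁻¹ • vecMulVec v v)).trace = 0 := by
    simp only [Matrix.mul_smul, Matrix.smul_mul, hAM, Matrix.zero_mul, smul_zero,
      Matrix.trace_zero]
  -- Part 3
  have part3 : ∀ W : Matrix (Fin n) (Fin n) ℝ, Wᵀ = -W → 0 ≤ (A * W * B * Wᵀ).trace := by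
    intro W _
    obtain ⟨C, hC⟩ : ∃ C : Matrix (Fin n) (Fin n) ℝ, A = Cᴴ * C := by
      open scoped MatrixOrder Matrix.Norms.L2Operator in
      obtain ⟨C, hC⟩ := CStarAlgebra.nonneg_iff_eq_star_mul_self.mp hA.nonneg
      exact ⟨C, hC⟩
    have hpsd : ((C * W) * B * (C * W)ᴴ).PosSemidef := hB.mul_mul_conjTranspose_same (C * W)
    have htr : (A * W * B * Wᵀ).trace = ((C * W) * B * (C * W)ᴴ).trace := by
      have hH : Wᴴ = Wᵀ := by
        ext i j; simp [Matrix.conjTranspose_apply]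
      rw [hC, Matrix.conjTranspose_mul, hH]
      rw [show Cᴴ * C * W * B * Wᵀ = Cᴴ * (C * W * B * Wᵀ) by simp only [Matrix.mul_assoc]]
      rw [Matrix.trace_mul_comm]
      simp only [Matrix.mul_assoc]
    rw [htr]
    exact psd_trace_nonneg hpsd
  refine ⟨part1, part2, part3, ?_⟩
  -- Part 4
  have hmem : (0 : ℝ) ∈ Eset A B := by
    refine ⟨c⁻¹ • vecMulVec v v, ?_, part1, part2.symm⟩
    rw [Matrix.transpose_smul]
    congr 1
    ext i j
    simp [Matrix.transpose_apply, Matrix.vecMulVec_apply, mul_comm]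
  have hE : sInf (Eset A B) ≤ 0 := by
    by_cases hb : BddBelow (Eset A B)
    · exact csInf_le hb hmem
    · rw [Real.sInf_of_not_bddBelow hb]
  have hO : 0 ≤ sInf (Oset A B) := by
    apply Real.sInf_nonneg
    rintro t ⟨W, hW, _, rfl⟩
    exact part3 W hW
  linarith
end
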